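/- arXiv:1309.1965 — 11 statements merged into one kernel-verified Lean document; each statement's English description precedes it below -/
import Mathlib

section
/- Let W be a vector space over an infinite field K, and let W₀ and W₁ be subspaces of W such that W = W₀ ⊕ W₁ (internal direct sum: W₀ + W₁ = W and W₀ ∩ W₁ = {0}). Let M ⊆ W₀ with M ≠ W₀ and let F = M + W₁ = {m + w : m ∈ M, w ∈ W₁}. If M is star-like (as a subset of W₀), then F is star-like (as a subset of W). -/
open Cardinal

universe u

/-- The additivity number `A(M,W)`: the least element of
`{|F| : F ⊆ W ∧ ∀ w ∈ W, w + F ⊄ M} ∪ {|W|⁺}`. -/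
noncomputable def addNum {W : Type u} [AddCommGroup W] (M : Set W) : Cardinal.{u} :=
  sInf ({κ | ∃ F : Set W, #F = κ ∧ ∀ w : W, ¬ ((fun f => w + f) '' F ⊆ M)} ∪
    {Order.succ #W})

/-- `V` is a maximal linear subspace contained in `M ∪ {0}`. -/
def IsMaxSubspace (K : Type u) {W : Type u} [Field K] [AddCommGroup W] [Module K W]
    (M : Set W) (V : Submodule K W) : Prop :=
  (V : Set W) ⊆ M ∪ {0} ∧ ∀ V' : Submodule K W, V < V' → ¬ ((V' : Set W) ⊆ M ∪ {0})

/-- The maximal lineability number `mL(M)`: the minimum of the dimensions of the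
maximal linear subspaces of `M ∪ {0}`. -/
noncomputable def mL (K : Type u) {W : Type u} [Field K] [AddCommGroup W] [Module K W]
    (M : Set W) : Cardinal.{u} :=
  sInf {κ | ∃ V : Submodule K W, IsMaxSubspace K M V ∧ Module.rank K V = κ}

/-- The lineability number `L(M)`: the least cardinal `κ` such that `M ∪ {0}` contains
no linear subspace of dimension `κ`. -/
noncomputable def linNum (K : Type u) {W : Type u} [Field K] [AddCommGroup W] [Module K W]
    (M : Set W) : Cardinal.{u} :=
  sInf {κ | ¬ ∃ V : Submodule K W, (V : Set W) ⊆ M ∪ {0} ∧ Module.rank K V = κ}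

/-- The star of `M`: the set of `w` such that `c • w ∈ M` for every nonzero scalar `c`. -/
def starSet (K : Type u) {W : Type u} [Field K] [AddCommGroup W] [Module K W]
    (M : Set W) : Set W :=
  {w | ∀ c : K, c ≠ 0 → c • w ∈ M}

/-- `M` is star-like provided `st(M) = M`. -/
def StarLike (K : Type u) {W : Type u} [Field K] [AddCommGroup W] [Module K W]
    (M : Set W) : Prop :=
  starSet K M = M

open Pointwise

theorem stmt5 {K W : Type u} [Field K] [Infinite K] [AddCommGroup W] [Module K W]
    (W₀ W₁ : Submodule K W) (hsup : W₀ ⊔ W₁ = ⊤) (hinf : W₀ ⊓ W₁ = ⊥)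
    (M : Set W) (hM : M ⊆ (W₀ : Set W)) (hMne : M ≠ (W₀ : Set W))
    (hstar : StarLike K M) :
    StarLike K (M + (W₁ : Set W)) := by
  ext w
  constructor
  · intro hw
    obtain ⟨w₀, hw₀, w₁, hw₁, rfl⟩ :=
      Submodule.mem_sup.mp (show w ∈ W₀ ⊔ W₁ by rw [hsup]; trivial)
    have hkey : w₀ ∈ starSet K M := by
      intro c hc
      obtain ⟨m, hm, v, hv, heq⟩ := hw c hc
      have hmem : c • w₀ - m ∈ W₀ ⊓ W₁ := by
        constructor
        · exact sub_mem (Submodule.smul_mem _ _ hw₀) (hM hm)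
        · have : c • w₀ - m = v - c • w₁ := by
            have h2 : m + v = c • w₀ + c • w₁ := by
              simpa [smul_add] using heq
            rw [sub_eq_sub_iff_add_eq_add, ← h2]
            abel
          rw [this]
          exact sub_mem hv (Submodule.smul_mem _ _ hw₁)
      rw [hinf, Submodule.mem_bot, sub_eq_zero] at hmem
      rwa [hmem]
    rw [hstar] at hkey
    exact ⟨w₀, hkey, w₁, hw₁, rfl⟩
  · rintro ⟨m, hm, v, hv, rfl⟩ c hc
    have hmM : c • m ∈ M := by
      rw [← hstar] at hm
      exact hm c hc
    exact ⟨c • m, hmM, c • v, Submodule.smul_mem _ _ hv, (smul_add c m v).symm⟩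
end

section
/- Let W be a vector space over an infinite field K, and let W₀ and W₁ be subspaces of W such that W = W₀ ⊕ W₁ (internal direct sum: W₀ + W₁ = W and W₀ ∩ W₁ = {0}). Let M ⊆ W₀ with M ≠ W₀ and let F = M + W₁ = {m + w : m ∈ M, w ∈ W₁}. Then A(F,W) = A(M,W₀), where A(M,W₀) is the additivity of M computed inside the vector space W₀. -/
open Cardinal

universe u

open Pointwise

theorem stmt6 {K W : Type u} [Field K] [Infinite K] [AddCommGroup W] [Module K W]
    (W₀ W₁ : Submodule K W) (hsup : W₀ ⊔ W₁ = ⊤) (hinf : W₀ ⊓ W₁ = ⊥)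
    (M : Set W) (hM : M ⊆ (W₀ : Set W)) (hMne : M ≠ (W₀ : Set W)) :
    addNum (M + (W₁ : Set W)) = addNum (Subtype.val ⁻¹' M : Set W₀) := by
  have hcompl : IsCompl W₀ W₁ := ⟨disjoint_iff.2 hinf, codisjoint_iff.2 hsup⟩
  set p := W₀.linearProjOfIsCompl W₁ hcompl with hp
  have hleft : ∀ y : W₀, p y = y := fun y =>
    Submodule.linearProjOfIsCompl_apply_left hcompl y
  -- membership characterization
  have hmem : ∀ x : W, x ∈ M + (W₁ : Set W) ↔ ((p x : W) ∈ M) := by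
    intro x
    constructor
    · rintro ⟨m, hm, v, hv, rfl⟩
      have : p (m + v) = ⟨m, hM hm⟩ := by
        rw [map_add, show p v = 0 from Submodule.projectionOnto_apply_of_mem_right hcompl hv, add_zero]
        exact hleft ⟨m, hM hm⟩
      rw [this]; exact hm
    · intro h
      have hsub : x - (p x : W) ∈ W₁ := by
        rw [← Submodule.projectionOnto_apply_eq_zero_iff (q := W₁) hcompl, map_sub,
          Submodule.projectionOnto_apply_left hcompl (p x)]
        exact sub_self _
      exact ⟨(p x : W), h, x - (p x : W), hsub, add_sub_cancel _ _⟩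
  -- a point of W₀ outside M
  obtain ⟨x₀, hx₀W, hx₀M⟩ : ∃ x₀, x₀ ∈ W₀ ∧ x₀ ∉ M := by
    by_contra h
    push_neg at h
    exact hMne (Set.Subset.antisymm hM h)
  apply le_antisymm
  · -- addNum (M + W₁) ≤ addNum (preimage)
    apply le_csInf
    · exact ⟨Order.succ #↥W₀, Or.inr rfl⟩
    rintro κ (⟨F, hF, hFspec⟩ | hκ)
    · have hwit : (#↥(Subtype.val '' F)) ∈
          ({κ | ∃ F : Set W, #F = κ ∧ ∀ w : W, ¬ ((fun f => w + f) '' F ⊆ M + (W₁ : Set W))} ∪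
            {Order.succ #W}) := by
        refine Or.inl ⟨Subtype.val '' F, rfl, ?_⟩
        intro w hw
        apply hFspec (p w)
        rintro - ⟨f, hf, rfl⟩
        have h1 : w + (f : W) ∈ M + (W₁ : Set W) :=
          hw ⟨(f : W), ⟨f, hf, rfl⟩, rfl⟩
        rw [hmem] at h1
        have h2 : p (w + (f : W)) = p w + f := by
          rw [map_add, hleft f]
        rw [h2] at h1
        exact h1
      calc addNum (M + (W₁ : Set W)) ≤ #↥(Subtype.val '' F) := csInf_le' hwit
        _ = κ := by rw [Cardinal.mk_image_eq Subtype.val_injective, hF]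
    · -- κ = succ #W₀ ; use F = (W₀ : Set W)
      have hwit : (#↥(W₀ : Set W)) ∈
          ({κ | ∃ F : Set W, #F = κ ∧ ∀ w : W, ¬ ((fun f => w + f) '' F ⊆ M + (W₁ : Set W))} ∪
            {Order.succ #W}) := by
        refine Or.inl ⟨(W₀ : Set W), rfl, ?_⟩
        intro w hw
        have hfmem : x₀ - (p w : W) ∈ (W₀ : Set W) := sub_mem hx₀W (p w).2
        have h1 : w + (x₀ - (p w : W)) ∈ M + (W₁ : Set W) :=
          hw ⟨_, hfmem, rfl⟩
        rw [hmem] at h1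
        have h2 : p (w + (x₀ - (p w : W))) = ⟨x₀, hx₀W⟩ := by
          have : w + (x₀ - (p w : W)) = (⟨x₀, hx₀W⟩ : W₀) + (w - (p w : W)) := by
            simp; abel
          rw [this, map_add, hleft, map_sub]
          have h3 : p ((p w : W)) = p w := hleft (p w)
          rw [h3, sub_self, add_zero]
        rw [h2] at h1
        exact hx₀M h1
      calc addNum (M + (W₁ : Set W)) ≤ #↥(W₀ : Set W) := csInf_le' hwit
        _ ≤ κ := by
          rw [Set.mem_singleton_iff] at hκ
          subst hκ
          exact le_of_lt (lt_of_le_of_lt le_rfl (Order.lt_succ _))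
  · -- addNum (preimage) ≤ addNum (M + W₁)
    apply le_csInf
    · exact ⟨Order.succ #W, Or.inr rfl⟩
    rintro κ (⟨F, hF, hFspec⟩ | hκ)
    · have hwit : (#↥(p '' F)) ∈
          ({κ | ∃ F : Set ↥W₀, #F = κ ∧
              ∀ w : ↥W₀, ¬ ((fun f => w + f) '' F ⊆ Subtype.val ⁻¹' M)} ∪
            {Order.succ #↥W₀}) := by
        refine Or.inl ⟨p '' F, rfl, ?_⟩
        intro w₀ hw₀
        apply hFspec (w₀ : W)
        intro x hx
        obtain ⟨f, hf, rfl⟩ := hx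
        rw [hmem]
        have h1 : w₀ + p f ∈ Subtype.val ⁻¹' M :=
          hw₀ ⟨p f, ⟨f, hf, rfl⟩, rfl⟩
        have h2 : p ((w₀ : W) + f) = w₀ + p f := by
          rw [map_add, hleft w₀]
        rw [h2]
        exact h1
      calc addNum (Subtype.val ⁻¹' M : Set ↥W₀) ≤ #↥(p '' F) := csInf_le' hwit
        _ ≤ #↥F := Cardinal.mk_image_le
        _ = κ := hF
    · have hwit : (#↥(Set.univ : Set ↥W₀)) ∈
          ({κ | ∃ F : Set ↥W₀, #F = κ ∧
              ∀ w : ↥W₀, ¬ ((fun f => w + f) '' F ⊆ Subtype.val ⁻¹' M)} ∪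
            {Order.succ #↥W₀}) := by
        refine Or.inl ⟨Set.univ, rfl, ?_⟩
        intro w₀ hw₀
        have h1 : w₀ + ((⟨x₀, hx₀W⟩ : ↥W₀) - w₀) ∈ Subtype.val ⁻¹' M :=
          hw₀ ⟨_, Set.mem_univ _, rfl⟩
        simp at h1
        exact hx₀M h1
      calc addNum (Subtype.val ⁻¹' M : Set ↥W₀) ≤ #↥(Set.univ : Set ↥W₀) := csInf_le' hwit
        _ = #↥W₀ := Cardinal.mk_univ
        _ ≤ #W := Cardinal.mk_subtype_le _
        _ ≤ κ := by
          rw [Set.mem_singleton_iff] at hκ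
          subst hκ
          exact le_of_lt (Order.lt_succ _)
end

section
/- Let W be a vector space over an infinite field K, and let W₀ and W₁ be subspaces of W such that W = W₀ ⊕ W₁ (internal direct sum: W₀ + W₁ = W and W₀ ∩ W₁ = {0}). Let M ⊆ W₀ with M ≠ W₀, 0 ∈ M, and let F = M + W₁ = {m + w : m ∈ M, w ∈ W₁}. Then mL(F) = mL(M) + dim(W₁), where the addition is cardinal addition. -/
open Cardinal

universe u

open Pointwise

/-- Existence of a maximal subspace of `M ∪ {0}` (Zorn). -/
lemma exists_isMaxSubspace (K : Type u) {W : Type u} [Field K] [AddCommGroup W] [Module K W]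
    (M : Set W) : ∃ V : Submodule K W, IsMaxSubspace K M V := by
  obtain ⟨V, -, hV⟩ := zorn_le_nonempty₀ {V : Submodule K W | (V : Set W) ⊆ M ∪ {0}}
    (fun c hcs hc y hy => by
      refine ⟨sSup c, ?_, fun z hz => le_sSup hz⟩
      intro x hx
      obtain ⟨p, hp, hxp⟩ := (Submodule.mem_sSup_of_directed ⟨y, hy⟩ hc.directedOn).1 hx
      exact hcs hp hxp) ⊥
    (by
      intro x hx
      right
      simpa using hx)
  refine ⟨V, hV.1, fun V' hlt hsub => ?_⟩
  exact hlt.not_ge (hV.2 hsub hlt.le)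

theorem stmt7 {K W : Type u} [Field K] [Infinite K] [AddCommGroup W] [Module K W]
    (W₀ W₁ : Submodule K W) (hsup : W₀ ⊔ W₁ = ⊤) (hinf : W₀ ⊓ W₁ = ⊥)
    (M : Set W) (hM : M ⊆ (W₀ : Set W)) (hMne : M ≠ (W₀ : Set W)) (h0 : (0 : W) ∈ M) :
    mL K (M + (W₁ : Set W)) = mL K (Subtype.val ⁻¹' M : Set W₀) + Module.rank K W₁ := by
  classical
  set F : Set W := M + (W₁ : Set W) with hF
  set M' : Set W₀ := Subtype.val ⁻¹' M with hM'
  have h0' : (0 : W₀) ∈ M' := by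
    simp only [hM', Set.mem_preimage, Submodule.coe_zero]
    exact h0
  -- If x ∈ F and x ∈ W₀ then x ∈ M.
  have hFW₀ : ∀ x : W, x ∈ F → x ∈ W₀ → x ∈ M := by
    intro x hx hx0
    obtain ⟨m, hm, v, hv, rfl⟩ := Set.mem_add.1 hx
    have hmW : m ∈ W₀ := hM hm
    have hvW : v ∈ W₀ := by
      have := W₀.sub_mem hx0 hmW
      simpa using this
    have hv0 : v = 0 := by
      have : v ∈ W₀ ⊓ W₁ := ⟨hvW, hv⟩
      rw [hinf] at this
      simpa using this
    rw [hv0, add_zero]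
    exact hm
  -- decomposition of submodules containing W₁
  have decomp : ∀ U : Submodule K W, W₁ ≤ U → (U ⊓ W₀) ⊔ W₁ = U := by
    intro U hle
    refine le_antisymm (sup_le inf_le_left hle) ?_
    intro u hu
    have htop : u ∈ W₀ ⊔ W₁ := by rw [hsup]; trivial
    obtain ⟨a, ha, b, hb, rfl⟩ := Submodule.mem_sup.1 htop
    have haU : a ∈ U := by
      have := U.sub_mem hu (hle hb)
      simpa using this
    exact Submodule.add_mem _ (Submodule.mem_sup_left ⟨haU, ha⟩) (Submodule.mem_sup_right hb)
  -- image of a subspace of M' ∪ {0} is in F ∪ {0}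
  have sub_lemma : ∀ V : Submodule K W₀, (V : Set W₀) ⊆ M' ∪ {0} →
      ((V.map W₀.subtype ⊔ W₁ : Submodule K W) : Set W) ⊆ F ∪ {0} := by
    intro V hV x hx
    obtain ⟨a, ha, b, hb, rfl⟩ := Submodule.mem_sup.1 hx
    obtain ⟨v0, hv0, rfl⟩ := ha
    left
    rcases hV hv0 with h | h
    · exact Set.mem_add.2 ⟨(v0 : W), h, b, hb, rfl⟩
    · have hz : (v0 : W) = 0 := by
        have : v0 = 0 := h
        rw [this]; rfl
      rw [Submodule.subtype_apply, hz, zero_add]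
      exact Set.mem_add.2 ⟨0, h0, b, hb, by rw [zero_add]⟩
  -- every maximal subspace of F ∪ {0} contains W₁
  have maxW₁ : ∀ U : Submodule K W, IsMaxSubspace K F U → W₁ ≤ U := by
    intro U hU
    by_contra h
    have hlt : U < U ⊔ W₁ := lt_of_le_of_ne le_sup_left fun he => h (he ▸ le_sup_right)
    refine hU.2 _ hlt ?_
    intro x hx
    obtain ⟨a, ha, b, hb, rfl⟩ := Submodule.mem_sup.1 hx
    rcases hU.1 ha with h1 | h1
    · obtain ⟨m, hm, v, hv, rfl⟩ := Set.mem_add.1 h1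
      exact Or.inl (Set.mem_add.2 ⟨m, hm, v + b, W₁.add_mem hv hb, (add_assoc _ _ _).symm⟩)
    · have : a = 0 := h1
      rw [this, zero_add]
      exact Or.inl (Set.mem_add.2 ⟨0, h0, b, hb, by rw [zero_add]⟩)
  -- (map V ⊔ W₁) ⊓ W₀ = map V
  have inf_eq : ∀ V : Submodule K W₀, (V.map W₀.subtype ⊔ W₁) ⊓ W₀ = V.map W₀.subtype := by
    intro V
    refine le_antisymm ?_ (le_inf le_sup_left (Submodule.map_subtype_le _ _))
    rintro x ⟨hx1, hx2⟩
    obtain ⟨a, ha, b, hb, rfl⟩ := Submodule.mem_sup.1 hx1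
    have haW : a ∈ W₀ := Submodule.map_subtype_le _ _ ha
    have hbW : b ∈ W₀ := by
      have := W₀.sub_mem hx2 haW
      simpa using this
    have hb0 : b = 0 := by
      have : b ∈ W₀ ⊓ W₁ := ⟨hbW, hb⟩
      rw [hinf] at this
      simpa using this
    rw [hb0, add_zero]
    exact ha
  -- rank computation
  have rank_eq : ∀ U : Submodule K W, W₁ ≤ U →
      Module.rank K U = Module.rank K ((U ⊓ W₀).comap W₀.subtype) + Module.rank K W₁ := by
    intro U hle
    have h1 : Module.rank K ((U ⊓ W₀).comap W₀.subtype) =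
        Module.rank K (U ⊓ W₀ : Submodule K W) :=
      (Submodule.comapSubtypeEquivOfLe inf_le_right).rank_eq
    have h2 := Submodule.rank_sup_add_rank_inf_eq (U ⊓ W₀) W₁
    have h3 : (U ⊓ W₀) ⊓ W₁ = ⊥ := by
      refine le_antisymm ?_ bot_le
      rw [← hinf]
      exact inf_le_inf_right _ inf_le_right
    rw [decomp U hle, h3, rank_bot, add_zero] at h2
    rw [h1]
    exact h2
  -- forward: from maximal V in M' build maximal U in F
  have forward : ∀ V : Submodule K W₀, IsMaxSubspace K M' V →
      IsMaxSubspace K F (V.map W₀.subtype ⊔ W₁) ∧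
        Module.rank K (V.map W₀.subtype ⊔ W₁ : Submodule K W)
          = Module.rank K V + Module.rank K W₁ := by
    intro V hV
    set U : Submodule K W := V.map W₀.subtype ⊔ W₁ with hU
    have hW₁U : W₁ ≤ U := le_sup_right
    have hcomap : (U ⊓ W₀).comap W₀.subtype = V := by
      rw [hU, inf_eq, Submodule.comap_map_eq_of_injective W₀.injective_subtype]
    constructor
    · refine ⟨sub_lemma V hV.1, ?_⟩
      intro U' hlt hsub
      have hW₁U' : W₁ ≤ U' := le_trans hW₁U hlt.le
      set V' : Submodule K W₀ := (U' ⊓ W₀).comap W₀.subtype with hV'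
      have hVleV' : V ≤ V' := by
        intro x hx
        exact ⟨hlt.le (le_sup_left (a := V.map W₀.subtype) (b := W₁)
          (Submodule.mem_map_of_mem hx)), x.2⟩
      have hVne : V ≠ V' := by
        intro he
        have hle2 : U' ≤ U := by
          rw [← decomp U' hW₁U']
          refine sup_le ?_ hW₁U
          intro x hx
          have hxV : (⟨x, hx.2⟩ : W₀) ∈ V := by
            rw [he]
            exact hx
          exact le_sup_left (a := V.map W₀.subtype) (b := W₁)
            ⟨⟨x, hx.2⟩, hxV, rfl⟩
        exact hlt.not_ge hle2
      refine hV.2 V' (lt_of_le_of_ne hVleV' hVne) ?_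
      intro x hx
      have hxU' : (x : W) ∈ U' := hx.1
      rcases hsub hxU' with h | h
      · exact Or.inl (hFW₀ _ h x.2)
      · right
        have : (x : W) = 0 := h
        exact Subtype.ext this
    · have := rank_eq U hW₁U
      rw [hcomap] at this
      exact this
  -- backward: from maximal U in F get maximal V in M'
  have backward : ∀ U : Submodule K W, IsMaxSubspace K F U →
      IsMaxSubspace K M' ((U ⊓ W₀).comap W₀.subtype) ∧
        Module.rank K U
          = Module.rank K ((U ⊓ W₀).comap W₀.subtype) + Module.rank K W₁ := by
    intro U hU
    have hW₁U : W₁ ≤ U := maxW₁ U hU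
    set V : Submodule K W₀ := (U ⊓ W₀).comap W₀.subtype with hV
    refine ⟨⟨?_, ?_⟩, rank_eq U hW₁U⟩
    · intro x hx
      have hxU : (x : W) ∈ U := hx.1
      rcases hU.1 hxU with h | h
      · exact Or.inl (hFW₀ _ h x.2)
      · right
        have : (x : W) = 0 := h
        exact Subtype.ext this
    · intro V' hlt hsub
      set U' : Submodule K W := V'.map W₀.subtype ⊔ W₁ with hU'
      have hUleU' : U ≤ U' := by
        rw [← decomp U hW₁U]
        refine sup_le ?_ le_sup_right
        intro x hx
        have hxV : (⟨x, hx.2⟩ : W₀) ∈ V' := hlt.le hx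
        exact le_sup_left (a := V'.map W₀.subtype) (b := W₁) ⟨⟨x, hx.2⟩, hxV, rfl⟩
      have hUne : U ≠ U' := by
        intro he
        obtain ⟨x0, hx0', hx0⟩ := SetLike.exists_of_lt hlt
        have hx0U' : (x0 : W) ∈ U' :=
          le_sup_left (a := V'.map W₀.subtype) (b := W₁) (Submodule.mem_map_of_mem hx0')
        have hx0U : (x0 : W) ∈ U := by rw [he]; exact hx0U'
        exact hx0 ⟨hx0U, x0.2⟩
      exact hU.2 U' (lt_of_le_of_ne hUleU' hUne) (sub_lemma V' hsub)
  -- conclude with cardinal arithmetic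
  set c : Cardinal.{u} := Module.rank K W₁ with hc
  set S : Set Cardinal.{u} :=
    {κ | ∃ U : Submodule K W, IsMaxSubspace K F U ∧ Module.rank K U = κ} with hS
  set S₀ : Set Cardinal.{u} :=
    {κ | ∃ V : Submodule K W₀, IsMaxSubspace K M' V ∧ Module.rank K V = κ} with hS₀
  have hmLF : mL K F = sInf S := rfl
  have hmLM : mL K M' = sInf S₀ := rfl
  have hS₀ne : S₀.Nonempty := by
    obtain ⟨V, hV⟩ := exists_isMaxSubspace K M'
    exact ⟨_, V, hV, rfl⟩
  have hSne : S.Nonempty := by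
    obtain ⟨U, hU⟩ := exists_isMaxSubspace K F
    exact ⟨_, U, hU, rfl⟩
  rw [hmLF, hmLM]
  refine le_antisymm ?_ ?_
  · obtain ⟨V, hV, hrV⟩ := csInf_mem hS₀ne
    obtain ⟨hmax, hrank⟩ := forward V hV
    have hmem : sInf S₀ + c ∈ S := ⟨_, hmax, by rw [hrank, hrV]⟩
    exact csInf_le (OrderBot.bddBelow S) hmem
  · obtain ⟨U, hU, hrU⟩ := csInf_mem hSne
    obtain ⟨hmax, hrank⟩ := backward U hU
    have h1 : sInf S₀ ≤ Module.rank K ((U ⊓ W₀).comap W₀.subtype) :=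
      csInf_le (OrderBot.bddBelow S₀) ⟨_, hmax, rfl⟩
    calc sInf S₀ + c ≤ Module.rank K ((U ⊓ W₀).comap W₀.subtype) + c :=
          add_le_add_left h1 c
      _ = sInf S := by rw [← hrank, hrU]
end

section
/- Let W be a vector space over an infinite field K, and let W₀ and W₁ be subspaces of W such that W = W₀ ⊕ W₁ (internal direct sum: W₀ + W₁ = W and W₀ ∩ W₁ = {0}). Let M ⊆ W₀ with M ≠ W₀, 0 ∈ M, and let F = M + W₁ = {m + w : m ∈ M, w ∈ W₁}. If dim(W₁) < L(M), then L(F) = L(M) + dim(W₁), where the addition is cardinal addition and L(M) is computed inside W₀. -/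
open Cardinal

universe u

section helpers
variable {K W : Type u} [Field K] [AddCommGroup W] [Module K W]

lemma exists_submodule_rank_eq (V : Submodule K W) {κ : Cardinal.{u}}
    (h : κ ≤ Module.rank K V) :
    ∃ V' : Submodule K W, V' ≤ V ∧ Module.rank K V' = κ := by
  obtain ⟨s, hs, hli⟩ := le_rank_iff_exists_linearIndependent.mp h
  have hli2 : LinearIndependent K (fun x : s => ((x : ↥V) : W)) :=
    hli.map' V.subtype (Submodule.ker_subtype V)
  refine ⟨Submodule.span K (Set.range fun x : s => ((x : ↥V) : W)), ?_, ?_⟩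
  · rw [Submodule.span_le]; rintro _ ⟨x, rfl⟩; exact (x : ↥V).2
  · rw [rank_span hli2, Cardinal.mk_range_eq _ hli2.injective, hs]

lemma realizes_lt_linNum {M : Set W} (V : Submodule K W) (hV : (V : Set W) ⊆ M ∪ {0}) :
    Module.rank K V < linNum K M := by
  have hne : {κ | ¬ ∃ V : Submodule K W, (V : Set W) ⊆ M ∪ {0} ∧ Module.rank K V = κ}.Nonempty := by
    refine ⟨Order.succ (Module.rank K W), ?_⟩
    rintro ⟨V', -, hr⟩
    exact (Order.lt_succ (Module.rank K W)).not_ge (hr ▸ Submodule.rank_le V')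
  by_contra hc
  push_neg at hc
  have hmem := csInf_mem hne
  obtain ⟨V'', hle, hrank⟩ := exists_submodule_rank_eq V hc
  exact hmem ⟨V'', fun x hx => hV (hle hx), hrank⟩

lemma exists_of_lt_linNum {M : Set W} {κ : Cardinal.{u}} (h : κ < linNum K M) :
    ∃ V : Submodule K W, (V : Set W) ⊆ M ∪ {0} ∧ Module.rank K V = κ := by
  by_contra hc
  have hle : linNum K M ≤ κ := csInf_le' hc
  exact absurd h hle.not_gt

end helpers

lemma card_aux {a b L d : Cardinal.{u}} (ha : a < L) (hb : b ≤ d) (hd : d < L) :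
    a + b < L + d := by
  rcases lt_or_ge L ℵ₀ with hL | hL
  · obtain ⟨l, rfl⟩ := Cardinal.lt_aleph0.mp hL
    obtain ⟨n, rfl⟩ := Cardinal.lt_aleph0.mp (ha.trans hL)
    obtain ⟨dd, rfl⟩ := Cardinal.lt_aleph0.mp (hd.trans hL)
    obtain ⟨m, rfl⟩ := Cardinal.lt_aleph0.mp (hb.trans_lt (hd.trans hL))
    rw [← Nat.cast_add, ← Nat.cast_add, Nat.cast_lt]
    rw [Nat.cast_lt] at ha hd
    rw [Nat.cast_le] at hb
    omega
  · calc a + b < L := Cardinal.add_lt_of_lt hL ha (hb.trans_lt hd)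
    _ ≤ L + d := self_le_add_right L d

lemma decomp_aux {ν L d : Cardinal.{u}} (h : ν < L + d) (hL : 0 < L) (hd : d < L) :
    ∃ κ δ : Cardinal.{u}, κ < L ∧ δ ≤ d ∧ κ + δ = ν := by
  rcases le_or_gt ν d with hν | hν
  · exact ⟨0, ν, hL, hν, zero_add ν⟩
  rcases lt_or_ge ν L with h2 | h2
  · exact ⟨ν, 0, h2, zero_le, add_zero ν⟩
  have hLfin : L < ℵ₀ := by
    by_contra hinf
    push_neg at hinf
    rw [Cardinal.add_eq_left hinf hd.le] at h
    exact h.not_ge h2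
  obtain ⟨l, rfl⟩ := Cardinal.lt_aleph0.mp hLfin
  obtain ⟨dd, rfl⟩ := Cardinal.lt_aleph0.mp (hd.trans hLfin)
  have hνfin : ν < ℵ₀ := h.trans (by rw [← Nat.cast_add]; exact Cardinal.nat_lt_aleph0 _)
  obtain ⟨n, rfl⟩ := Cardinal.lt_aleph0.mp hνfin
  rw [← Nat.cast_add, Nat.cast_lt] at h
  rw [Nat.cast_lt] at hν
  refine ⟨((n - dd : ℕ) : Cardinal), dd, ?_, le_refl _, ?_⟩
  · rw [Nat.cast_lt]; omega
  · rw [← Nat.cast_add, Nat.cast_inj]; omega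

open Pointwise

theorem stmt8 {K W : Type u} [Field K] [Infinite K] [AddCommGroup W] [Module K W]
    (W₀ W₁ : Submodule K W) (hsup : W₀ ⊔ W₁ = ⊤) (hinf : W₀ ⊓ W₁ = ⊥)
    (M : Set W) (hM : M ⊆ (W₀ : Set W)) (hMne : M ≠ (W₀ : Set W)) (h0 : (0 : W) ∈ M)
    (hdim : Module.rank K W₁ < linNum K (Subtype.val ⁻¹' M : Set W₀)) :
    linNum K (M + (W₁ : Set W)) =
      linNum K (Subtype.val ⁻¹' M : Set W₀) + Module.rank K W₁ := by
  set M' : Set ↥W₀ := Subtype.val ⁻¹' M with hM'def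
  set L := linNum K M' with hLdef
  set d := Module.rank K W₁ with hddef
  have h0' : (0 : ↥W₀) ∈ M' := by simpa [hM'def] using h0
  have hF0 : (0 : W) ∈ M + (W₁ : Set W) := by
    simpa using Set.add_mem_add h0 W₁.zero_mem
  have hFu : (M + (W₁ : Set W)) ∪ {0} = M + (W₁ : Set W) :=
    Set.union_eq_self_of_subset_right (Set.singleton_subset_iff.mpr hF0)
  have hM'u : M' ∪ {0} = M' :=
    Set.union_eq_self_of_subset_right (Set.singleton_subset_iff.mpr h0')
  have hcompl : IsCompl W₀ W₁ := ⟨disjoint_iff.mpr hinf, codisjoint_iff.mpr hsup⟩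
  set π := W₀.linearProjOfIsCompl W₁ hcompl with hπdef
  have hL0 : 0 < L := by
    have := realizes_lt_linNum (M := M') (⊥ : Submodule K ↥W₀)
      (by simp)
    simpa using this
  apply le_antisymm
  · -- upper bound: no submodule of F of rank L + d
    refine csInf_le' ?_
    rintro ⟨U, hU, hrU⟩
    rw [hFu] at hU
    set f : ↥U →ₗ[K] ↥W₀ := π ∘ₗ U.subtype with hfdef
    have key : Module.rank K (LinearMap.range f) + Module.rank K (LinearMap.ker f)
        = Module.rank K ↥U := LinearMap.rank_range_add_rank_ker f
    have h1 : ((LinearMap.range f : Submodule K ↥W₀) : Set ↥W₀) ⊆ M' ∪ {0} := by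
      rintro y hy
      obtain ⟨x, rfl⟩ := hy
      have hx : (x : W) ∈ M + (W₁ : Set W) := hU x.2
      obtain ⟨m, hm, w, hw, hmw⟩ := Set.mem_add.mp hx
      left
      show (f x : W) ∈ M
      have : f x = π (m + w) := by rw [hfdef]; simp [← hmw]
      rw [this, map_add]
      have hπm : π m = ⟨m, hM hm⟩ := Submodule.linearProjOfIsCompl_apply_left hcompl ⟨m, hM hm⟩
      have hπw : π w = 0 := Submodule.projectionOnto_apply_of_mem_right hcompl hw
      rw [hπm, hπw, add_zero]
      exact hm
    have h2 : Module.rank K (LinearMap.range f) < L :=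
      realizes_lt_linNum _ h1
    have h3 : Module.rank K (LinearMap.ker f) ≤ d := by
      have hker : ∀ x : ↥(LinearMap.ker f), ((x : ↥U) : W) ∈ W₁ := by
        intro x
        have hx : π ((x : ↥U) : W) = 0 := x.2
        have := Submodule.linearProjOfIsCompl_ker (p := W₀) (q := W₁) hcompl
        rw [← this]
        exact hx
      set g : ↥(LinearMap.ker f) →ₗ[K] ↥W₁ :=
        LinearMap.codRestrict W₁ (U.subtype ∘ₗ (LinearMap.ker f).subtype) hker with hgdef
      have hginj : Function.Injective g := by
        intro a b hab
        have h2' : ((g a : ↥W₁) : W) = ((g b : ↥W₁) : W) := congrArg Subtype.val hab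
        exact Subtype.ext (Subtype.ext h2')
      exact g.rank_le_of_injective hginj
    rw [← key] at hrU
    exact (card_aux h2 h3 hdim).ne hrU
  · -- lower bound
    refine le_csInf ?_ ?_
    · refine ⟨Order.succ (Module.rank K W), ?_⟩
      rintro ⟨V', -, hr⟩
      exact (Order.lt_succ (Module.rank K W)).not_ge (hr ▸ Submodule.rank_le V')
    · intro ν hν
      by_contra hc
      push_neg at hc
      obtain ⟨κ, δ, hκ, hδ, hκδ⟩ := decomp_aux hc hL0 hdim
      obtain ⟨V', hV'M, hV'rank⟩ := exists_of_lt_linNum hκ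
      rw [hM'u] at hV'M
      set V : Submodule K W := V'.map W₀.subtype with hVdef
      have hVrank : Module.rank K ↥V = κ := by
        rw [← hV'rank]
        exact (Submodule.equivMapOfInjective W₀.subtype W₀.injective_subtype V').rank_eq.symm
      have hVM : (V : Set W) ⊆ M := by
        rintro x ⟨y, hy, rfl⟩
        exact hV'M hy
      have hVW₀ : V ≤ W₀ := Submodule.map_subtype_le W₀ V'
      obtain ⟨V₁, hV₁le, hV₁rank⟩ := exists_submodule_rank_eq W₁ hδ
      set U : Submodule K W := V ⊔ V₁ with hUdef
      have hUF : (U : Set W) ⊆ (M + (W₁ : Set W)) ∪ {0} := by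
        intro x hx
        obtain ⟨y, hy, z, hz, rfl⟩ := Submodule.mem_sup.mp hx
        left
        exact Set.add_mem_add (hVM hy) (hV₁le hz)
      have hinfbot : V ⊓ V₁ = ⊥ := by
        rw [← le_bot_iff, ← hinf]
        exact inf_le_inf hVW₀ hV₁le
      have hUrank : Module.rank K ↥U = ν := by
        have := Submodule.rank_sup_add_rank_inf_eq V V₁
        rw [hinfbot] at this
        simp only [rank_bot, add_zero] at this
        rw [hUdef, this, hVrank, hV₁rank, hκδ]
      exact hν ⟨U, hUF, hUrank⟩
end

section
/- Let W be a vector space over an infinite field K, and let W₀ and W₁ be subspaces of W such that W = W₀ ⊕ W₁ (internal direct sum: W₀ + W₁ = W and W₀ ∩ W₁ = {0}). Let M ⊆ W₀ with M ≠ W₀, 0 ∈ M, and let F = M + W₁ = {m + w : m ∈ M, w ∈ W₁}. Then a linear subspace V of W is maximal in F ∪ {0} if and only if V = V₀ + W₁ for some linear subspace V₀ of W₀ that is maximal in M ∪ {0}. -/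
open Cardinal

universe u

open Pointwise

theorem stmt9 {K W : Type u} [Field K] [Infinite K] [AddCommGroup W] [Module K W]
    (W₀ W₁ : Submodule K W) (hsup : W₀ ⊔ W₁ = ⊤) (hinf : W₀ ⊓ W₁ = ⊥)
    (M : Set W) (hM : M ⊆ (W₀ : Set W)) (hMne : M ≠ (W₀ : Set W)) (h0 : (0 : W) ∈ M)
    (V : Submodule K W) :
    IsMaxSubspace K (M + (W₁ : Set W)) V ↔
      ∃ V₀ : Submodule K W, V₀ ≤ W₀ ∧ IsMaxSubspace K M V₀ ∧ V = V₀ ⊔ W₁ := by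
  have h : IsCompl W₀ W₁ := IsCompl.of_eq hinf hsup
  set pr : W →ₗ[K] W := W₀.subtype ∘ₗ Submodule.projectionOnto W₀ W₁ h with hprdef
  have hpr_mem : ∀ x : W, pr x ∈ W₀ := fun x => (Submodule.projectionOnto W₀ W₁ h x).2
  have hpr_left : ∀ x ∈ W₀, pr x = x := fun x hx =>
    congrArg Subtype.val (Submodule.projectionOnto_apply_left h ⟨x, hx⟩)
  have hpr_right : ∀ x ∈ W₁, pr x = 0 := fun x hx => by
    simp [hprdef, Submodule.projectionOnto_apply_of_mem_right h hx]
  have hsub : ∀ x : W, x - pr x ∈ W₁ := fun x => by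
    have : pr (x - pr x) = 0 := by
      rw [map_sub, hpr_left (pr x) (hpr_mem x), sub_self]
    have h3 : ((Submodule.projectionOnto W₀ W₁ h (x - pr x) : W₀) : W) = 0 := this
    exact (Submodule.projectionOnto_apply_eq_zero_iff h).mp (by exact_mod_cast h3)
  -- membership in F
  have hF : ∀ x : W, x ∈ M + (W₁ : Set W) ↔ pr x ∈ M := by
    intro x
    constructor
    · rintro ⟨m, hm, w, hw, rfl⟩
      have : pr (m + w) = m := by
        rw [map_add, hpr_left m (hM hm), hpr_right w hw, add_zero]
      rw [this]; exact hm
    · intro hx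
      exact ⟨pr x, hx, x - pr x, hsub x, add_sub_cancel (pr x) x⟩
  have hFM : ∀ x : W, x ∈ M + (W₁ : Set W) ∪ {0} ↔ pr x ∈ M := by
    intro x
    constructor
    · rintro (hx | hx)
      · exact (hF x).mp hx
      · simp only [Set.mem_singleton_iff] at hx
        subst hx; rw [map_zero]; exact h0
    · intro hx; exact Or.inl ((hF x).mpr hx)
  constructor
  · rintro ⟨hVsub, hVmax⟩
    -- W₁ ≤ V
    have hW₁V : W₁ ≤ V := by
      by_contra hn
      have hle : V ≤ V ⊔ W₁ := le_sup_left
      have hlt : V < V ⊔ W₁ := lt_of_le_of_ne hle (fun he => hn (he ▸ le_sup_right))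
      refine hVmax (V ⊔ W₁) hlt ?_
      intro x hx
      rw [Set.mem_union, hF x]
      obtain ⟨v, hv, w, hw, rfl⟩ := Submodule.mem_sup.mp hx
      have hpv : pr v ∈ M := (hFM v).mp (hVsub hv)
      rw [map_add, hpr_right w hw, add_zero]
      exact Or.inl hpv
    refine ⟨V.map pr, ?_, ⟨?_, ?_⟩, ?_⟩
    · rintro _ ⟨v, _, rfl⟩; exact hpr_mem v
    · rintro _ ⟨v, hv, rfl⟩
      exact Or.inl ((hFM v).mp (hVsub hv))
    · intro V₀' hlt hsub'
      obtain ⟨y, hy, hyn⟩ := SetLike.exists_of_lt hlt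
      have hyW₀ : y ∈ W₀ := by
        rcases hsub' hy with hyM | hy0
        · exact hM hyM
        · simp only [Set.mem_singleton_iff] at hy0; subst hy0; exact W₀.zero_mem
      refine hVmax (V₀' ⊔ W₁) ?_ ?_
      · refine lt_of_le_of_ne ?_ ?_
        · intro v hv
          refine Submodule.mem_sup.mpr ⟨pr v, ?_, v - pr v, hsub v, add_sub_cancel _ _⟩
          exact hlt.le ⟨v, hv, rfl⟩
        · intro he
          have : y ∈ V := by
            have hy' : y ∈ V₀' ⊔ W₁ := Submodule.mem_sup_left hy
            rwa [← he] at hy'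
          exact hyn (by rw [← hpr_left y hyW₀]; exact ⟨y, this, rfl⟩)
      · intro x hx
        obtain ⟨a, ha, b, hb, rfl⟩ := Submodule.mem_sup.mp hx
        rw [Set.mem_union, hF, map_add, hpr_right b hb, add_zero]
        have haW₀ : a ∈ W₀ := by
          rcases hsub' ha with haM | ha0
          · exact hM haM
          · simp only [Set.mem_singleton_iff] at ha0; subst ha0; exact W₀.zero_mem
        rw [hpr_left a haW₀]
        rcases hsub' ha with haM | ha0
        · exact Or.inl haM
        · simp only [Set.mem_singleton_iff] at ha0; subst ha0; exact Or.inl h0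
    · -- V = map pr V ⊔ W₁
      refine le_antisymm ?_ ?_
      · intro v hv
        exact Submodule.mem_sup.mpr ⟨pr v, ⟨v, hv, rfl⟩, v - pr v, hsub v, add_sub_cancel _ _⟩
      · refine sup_le ?_ hW₁V
        rintro _ ⟨v, hv, rfl⟩
        rw [← sub_sub_cancel v (pr v)]
        exact V.sub_mem hv (hW₁V (hsub v))
  · rintro ⟨V₀, hV₀W₀, ⟨hV₀sub, hV₀max⟩, rfl⟩
    have hV₀M : (V₀ : Set W) ⊆ M := by
      intro x hx
      rcases hV₀sub hx with hxM | hx0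
      · exact hxM
      · simp only [Set.mem_singleton_iff] at hx0; subst hx0; exact h0
    constructor
    · intro x hx
      obtain ⟨a, ha, b, hb, rfl⟩ := Submodule.mem_sup.mp hx
      exact Or.inl ⟨a, hV₀M ha, b, hb, rfl⟩
    · intro V' hlt hsub'
      obtain ⟨y, hy, hyn⟩ := SetLike.exists_of_lt hlt
      have hpyn : pr y ∉ V₀ := by
        intro hc
        exact hyn (Submodule.mem_sup.mpr ⟨pr y, hc, y - pr y, hsub y, add_sub_cancel _ _⟩)
      refine hV₀max (V'.map pr) ?_ ?_
      · refine lt_of_le_of_ne ?_ ?_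
        · intro v hv
          have hvV' : v ∈ V' := hlt.le (Submodule.mem_sup_left hv)
          exact ⟨v, hvV', (hpr_left v (hV₀W₀ hv)).symm ▸ rfl⟩
        · intro he
          exact hpyn (he ▸ ⟨y, hy, rfl⟩)
      · rintro _ ⟨v, hv, rfl⟩
        exact Or.inl ((hFM v).mp (hsub' hv))
end

section
/- For every n ≥ 1, there exists a linear subspace V of the real vector space of all functions from ℝⁿ to ℝ such that V is closed in the topology of pointwise convergence, dim(V) = 𝔠, and every element of V is continuous. In other words, the class C(ℝⁿ) of continuous functions is 𝔠-spaceable with respect to the topology of pointwise convergence. -/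
open Cardinal Set

/-- Piecewise linear interpolation of nodal values `h : ℤ → ℝ`. -/
noncomputable def myInterp (h : ℤ → ℝ) (t : ℝ) : ℝ :=
  (1 - Int.fract t) * h ⌊t⌋ + Int.fract t * h (⌊t⌋ + 1)

/-- The affine piece on `[k, k+1]`. -/
noncomputable def myAff (h : ℤ → ℝ) (k : ℤ) (s : ℝ) : ℝ :=
  (1 - (s - k)) * h k + (s - k) * h (k + 1)

lemma myInterp_intCast (h : ℤ → ℝ) (k : ℤ) : myInterp h (k : ℝ) = h k := by
  simp [myInterp, Int.fract_intCast, Int.floor_intCast]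

lemma myInterp_eq_aff (h : ℤ → ℝ) (k : ℤ) {s : ℝ} (h1 : (k : ℝ) ≤ s) (h2 : s ≤ (k : ℝ) + 1) :
    myInterp h s = myAff h k s := by
  rcases eq_or_lt_of_le h2 with he | hlt
  · have : s = ((k + 1 : ℤ) : ℝ) := by push_cast; linarith
    subst this
    rw [myInterp_intCast]
    unfold myAff
    push_cast
    ring
  · have hf : ⌊s⌋ = k := Int.floor_eq_iff.mpr ⟨h1, by exact_mod_cast hlt⟩
    simp [myInterp, myAff, Int.fract, hf]

lemma myAff_continuous (h : ℤ → ℝ) (k : ℤ) : Continuous (myAff h k) := by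
  unfold myAff; fun_prop

lemma myInterp_continuous (h : ℤ → ℝ) : Continuous (myInterp h) := by
  rw [continuous_iff_continuousAt]
  intro t
  rw [continuousAt_iff_continuous_left_right]
  constructor
  · have h1 : ((⌈t⌉ : ℝ) - 1) < t := by linarith [Int.ceil_lt_add_one t]
    have h2 : t ≤ (⌈t⌉ : ℝ) := Int.le_ceil t
    apply ((myAff_continuous h (⌈t⌉ - 1)).continuousWithinAt).congr_of_eventuallyEq
    · filter_upwards [Ioc_mem_nhdsLE_of_mem
        (show t ∈ Ioc ((⌈t⌉ : ℝ) - 1) t from ⟨h1, le_refl t⟩)] with s hs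
      apply myInterp_eq_aff
      · push_cast; linarith [hs.1]
      · push_cast; linarith [hs.2]
    · apply myInterp_eq_aff <;> push_cast <;> linarith
  · have h1 : (⌊t⌋ : ℝ) ≤ t := Int.floor_le t
    have h2 : t < (⌊t⌋ : ℝ) + 1 := Int.lt_floor_add_one t
    apply ((myAff_continuous h ⌊t⌋).continuousWithinAt).congr_of_eventuallyEq
    · filter_upwards [Ico_mem_nhdsGE_of_mem
        (show t ∈ Ico t ((⌊t⌋ : ℝ) + 1) from ⟨le_refl t, h2⟩)] with s hs
      exact myInterp_eq_aff h ⌊t⌋ (le_trans h1 hs.1) hs.2.le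
    · exact myInterp_eq_aff h ⌊t⌋ h1 h2.le

/-- The linear map from nodal values to interpolated functions of the `i0`-th coordinate. -/
noncomputable def myL (n : ℕ) (i0 : Fin n) : (ℤ → ℝ) →ₗ[ℝ] ((Fin n → ℝ) → ℝ) where
  toFun h := fun x => myInterp h (x i0)
  map_add' h1 h2 := by funext x; simp [myInterp]; ring
  map_smul' c h := by funext x; simp [myInterp]; ring

lemma exp_li : LinearIndependent ℝ (fun a : ℝ => fun k : ℤ => Real.exp (a * k)) := by
  rw [linearIndependent_iff']
  intro s g hsum a ha
  set m := s.card with hm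
  set e := s.equivFin with he
  set w : Fin m → ℝ := fun i => Real.exp ((e.symm i : ℝ)) with hwdef
  have hw : Function.Injective w := by
    intro i j hij
    have h1 : ((e.symm i : ℝ)) = ((e.symm j : ℝ)) := Real.exp_injective hij
    have h2 : e.symm i = e.symm j := Subtype.ext h1
    exact e.symm.injective h2
  have hval : ∀ z : ℤ, ∑ i ∈ s, g i * Real.exp (i * z) = 0 := by
    intro z
    have := congrFun hsum z
    simpa [Finset.sum_apply] using this
  have hdet : (Matrix.vandermonde w).det ≠ 0 := Matrix.det_vandermonde_ne_zero_iff.mpr hw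
  have key : Matrix.vecMul (fun j => g (e.symm j)) (Matrix.vandermonde w) = 0 := by
    funext p
    have h2 := hval ((p : ℕ) : ℤ)
    have h3 : ∑ i ∈ s, g i * Real.exp (i * ((p : ℕ) : ℤ)) =
        ∑ i ∈ s, g i * Real.exp (i) ^ (p : ℕ) := by
      apply Finset.sum_congr rfl
      intro i _
      congr 1
      rw [← Real.exp_nat_mul]
      congr 1
      push_cast
      ring
    have h4 : ∑ j : Fin m, g (e.symm j) * w j ^ (p : ℕ) =
        ∑ i ∈ s, g i * Real.exp (i) ^ (p : ℕ) := by
      rw [← Finset.sum_coe_sort s (fun i => g i * Real.exp (i) ^ (p : ℕ))]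
      exact Equiv.sum_comp e.symm (fun i : s => g i * Real.exp ((i : ℝ)) ^ (p : ℕ))
    simp only [Matrix.vecMul, dotProduct, Matrix.vandermonde]
    show ∑ j : Fin m, g (e.symm j) * w j ^ (p : ℕ) = 0
    rw [h4, ← h3, h2]
  have hc := Matrix.eq_zero_of_vecMul_eq_zero hdet key
  have := congrFun hc (e ⟨a, ha⟩)
  simpa using this

lemma rank_int_fun : Module.rank ℝ (ℤ → ℝ) = Cardinal.continuum := by
  apply le_antisymm
  · calc Module.rank ℝ (ℤ → ℝ) ≤ #(ℤ → ℝ) := rank_le_card _ _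
      _ = Cardinal.continuum := by
          rw [Cardinal.mk_arrow]
          simp [Cardinal.mk_real, Cardinal.mk_int, Cardinal.continuum_power_aleph0]
  · have := exp_li.cardinal_le_rank
    rwa [Cardinal.mk_real] at this

/-- For every `n ≥ 1`, the class `C(ℝⁿ)` of continuous functions is `𝔠`-spaceable with
respect to the topology of pointwise convergence. -/
theorem stmt14 (n : ℕ) (hn : 1 ≤ n) :
    ∃ V : Submodule ℝ ((Fin n → ℝ) → ℝ),
      IsClosed (V : Set ((Fin n → ℝ) → ℝ)) ∧
      Module.rank ℝ V = Cardinal.continuum ∧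
      ∀ f ∈ V, Continuous f := by
  set i0 : Fin n := ⟨0, hn⟩ with hi0
  refine ⟨LinearMap.range (myL n i0), ?_, ?_, ?_⟩
  · have hset : (↑(LinearMap.range (myL n i0)) : Set ((Fin n → ℝ) → ℝ)) =
        ⋂ x : Fin n → ℝ, {f : (Fin n → ℝ) → ℝ |
          f x = (1 - Int.fract (x i0)) * f (fun _ => (⌊x i0⌋ : ℝ)) +
            Int.fract (x i0) * f (fun _ => (⌊x i0⌋ : ℝ) + 1)} := by
      ext f
      simp only [SetLike.mem_coe, LinearMap.mem_range, mem_iInter, mem_setOf_eq]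
      constructor
      · rintro ⟨h, rfl⟩ x
        show myInterp h (x i0) = (1 - Int.fract (x i0)) * myInterp h ((⌊x i0⌋ : ℝ)) +
          Int.fract (x i0) * myInterp h ((⌊x i0⌋ : ℝ) + 1)
        have e1 : myInterp h ((⌊x i0⌋ : ℝ)) = h ⌊x i0⌋ := myInterp_intCast h ⌊x i0⌋
        have e2 : myInterp h ((⌊x i0⌋ : ℝ) + 1) = h (⌊x i0⌋ + 1) := by
          have : ((⌊x i0⌋ : ℝ) + 1) = ((⌊x i0⌋ + 1 : ℤ) : ℝ) := by push_cast; ring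
          rw [this, myInterp_intCast]
        rw [e1, e2]
        rfl
      · intro hf
        refine ⟨fun k => f (fun _ => (k : ℝ)), ?_⟩
        funext x
        show myInterp (fun k => f fun _ => (k : ℝ)) (x i0) = f x
        rw [hf x]
        unfold myInterp
        have hc : ((fun _ => ((⌊x i0⌋ + 1 : ℤ) : ℝ)) : Fin n → ℝ) = fun _ => (⌊x i0⌋ : ℝ) + 1 := by
          funext j; push_cast; rfl
        simp only [hc]
    rw [hset]
    refine isClosed_iInter fun x => isClosed_eq (continuous_apply x) ?_
    exact ((continuous_const.mul (continuous_apply _)).add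
      (continuous_const.mul (continuous_apply _)))
  · have hinj : Function.Injective (myL n i0) := by
      intro h1 h2 heq
      funext k
      have := congrFun heq (fun _ => (k : ℝ))
      simpa [myL, myInterp_intCast] using this
    rw [← LinearEquiv.rank_eq (LinearEquiv.ofInjective (myL n i0) hinj), rank_int_fun]
  · rintro f ⟨h, rfl⟩
    exact (myInterp_continuous h).comp (continuous_apply i0)
end

section
/- For every n ≥ 1, there exists a linear subspace V of the real vector space of all functions from ℝⁿ to ℝ such that V is closed in the topology of pointwise convergence, dim(V) = 2^𝔠, and every nonzero element of V is a Jones function. In other words, the class J(ℝⁿ) of Jones functions is 2^𝔠-spaceable with respect to the topology of pointwise convergence. -/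
open Cardinal

/-- `f : ℝⁿ → ℝ` is a Jones function if its graph meets every closed set
`F ⊆ ℝⁿ × ℝ` whose projection onto `ℝⁿ` is uncountable. -/
def JonesFn {n : ℕ} (f : (Fin n → ℝ) → ℝ) : Prop :=
  ∀ F : Set ((Fin n → ℝ) × ℝ), IsClosed F → ¬ (Prod.fst '' F).Countable →
    ∃ x : Fin n → ℝ, (x, f x) ∈ F

open Set

namespace Stmt15Aux

/-- Transfinite recursion: a system of distinct representatives for a `κ`-indexed
family of sets each of cardinality at least `κ`. -/
theorem exists_injective_choice {α β : Type} {κ : Cardinal.{0}}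
    (e : κ.ord.ToType → β) (A : β → Set α) (hA : ∀ b, κ ≤ #(A b)) :
    ∃ x : κ.ord.ToType → α, Function.Injective x ∧ ∀ i, x i ∈ A (e i) := by
  classical
  have main : ∀ i : κ.ord.ToType, ∀ prev : ∀ j, j < i → α,
      ((A (e i)) \ (range fun j : Iio i => prev j j.2)).Nonempty := by
    intro i prev
    rw [Set.nonempty_iff_ne_empty, ne_eq, diff_eq_empty]
    intro hsub
    have h1 : #(A (e i)) ≤ #(range fun j : Iio i => prev j j.2) :=
      mk_le_mk_of_subset hsub
    have h2 : #(range fun j : Iio i => prev j j.2) ≤ #(Iio i) := mk_range_le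
    exact absurd ((hA (e i)).trans (h1.trans h2)) (not_le.mpr (mk_Iio_ord_toType i))
  let step : ∀ i : κ.ord.ToType, (∀ j, j < i → α) → α := fun i prev =>
    (main i prev).some
  let x : κ.ord.ToType → α := WellFoundedLT.fix step
  have hx : ∀ i, x i = step i (fun j _ => x j) := WellFoundedLT.fix_eq step
  have hmem : ∀ i, x i ∈ A (e i) \ (range fun j : Iio i => x j) := by
    intro i
    rw [hx i]
    exact (main i (fun j _ => x j)).some_mem
  refine ⟨x, ?_, fun i => (hmem i).1⟩
  intro i j hij
  by_contra hne
  rcases lt_or_gt_of_ne hne with h | h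
  · exact (hmem j).2 ⟨⟨i, h⟩, hij⟩
  · exact (hmem i).2 ⟨⟨j, h⟩, hij.symm⟩

variable (n : ℕ)

/-- The type of closed subsets of `ℝⁿ × ℝ` with uncountable projection. -/
abbrev ClosedUnc : Type :=
  {F : Set ((Fin n → ℝ) × ℝ) // IsClosed F ∧ ¬ (Prod.fst '' F).Countable}

/-- The projection of a closed set with uncountable projection has cardinality at
least the continuum. -/
theorem continuum_le_mk_proj (F : Set ((Fin n → ℝ) × ℝ)) (hF : IsClosed F)
    (hunc : ¬ (Prod.fst '' F).Countable) : 𝔠 ≤ #(Prod.fst '' F) := by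
  have hcover : Prod.fst '' F = ⋃ k : ℕ, Prod.fst '' (F ∩ Metric.closedBall 0 k) := by
    ext a
    simp only [mem_iUnion, mem_image]
    constructor
    · rintro ⟨p, hp, rfl⟩
      obtain ⟨k, hk⟩ := exists_nat_ge (dist p 0)
      exact ⟨k, p, ⟨hp, Metric.mem_closedBall.mpr hk⟩, rfl⟩
    · rintro ⟨k, p, ⟨hp, -⟩, rfl⟩
      exact ⟨p, hp, rfl⟩
  obtain ⟨k, hk⟩ : ∃ k : ℕ, ¬ (Prod.fst '' (F ∩ Metric.closedBall 0 k)).Countable := by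
    by_contra h
    push_neg at h
    exact hunc (hcover ▸ Set.countable_iUnion h)
  have hcpt : IsCompact (F ∩ Metric.closedBall 0 k) :=
    (isCompact_closedBall _ _).inter_left hF
  have hclosed_img : IsClosed (Prod.fst '' (F ∩ Metric.closedBall 0 k)) :=
    (hcpt.image continuous_fst).isClosed
  obtain ⟨g, hgr, -, hginj⟩ := hclosed_img.exists_nat_bool_injection_of_not_countable hk
  have h1 : 𝔠 ≤ #(Prod.fst '' (F ∩ Metric.closedBall 0 k)) := by
    have hle : #(ℕ → Bool) ≤ #(Prod.fst '' (F ∩ Metric.closedBall 0 k)) := by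
      refine mk_le_of_injective (f := fun a => (⟨g a, hgr (mem_range_self a)⟩ :
        Prod.fst '' (F ∩ Metric.closedBall 0 k))) ?_
      intro a b hab
      exact hginj (congrArg Subtype.val hab)
    have hcard : #(ℕ → Bool) = 𝔠 := by rw [mk_arrow]; simp [two_power_aleph0]
    rwa [hcard] at hle
  exact h1.trans (mk_le_mk_of_subset (image_mono inter_subset_left))

/-- There are at most continuum many closed subsets of `ℝⁿ × ℝ`. -/
theorem mk_closedUnc_le : #(ClosedUnc n) ≤ 𝔠 := by
  classical
  obtain ⟨b, hbc, -, hb⟩ := TopologicalSpace.exists_countable_basis ((Fin n → ℝ) × ℝ)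
  have hinj : Function.Injective
      (fun F : ClosedUnc n => {U : b | (U : Set ((Fin n → ℝ) × ℝ)) ∩ F.1 = ∅}) := by
    have key : ∀ F G : ClosedUnc n,
        {U : b | (U : Set ((Fin n → ℝ) × ℝ)) ∩ F.1 = ∅} =
        {U : b | (U : Set ((Fin n → ℝ) × ℝ)) ∩ G.1 = ∅} → F.1 ⊆ G.1 := by
      intro F G hFG x hxF
      by_contra hxG
      obtain ⟨U, hUb, hxU, hUsub⟩ :=
        hb.exists_subset_of_mem_open (a := x) hxG G.2.1.isOpen_compl
      have hUG : (U : Set ((Fin n → ℝ) × ℝ)) ∩ G.1 = ∅ := by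
        rw [Set.eq_empty_iff_forall_notMem]
        intro p hp
        exact hUsub hp.1 hp.2
      have : (⟨U, hUb⟩ : b) ∈ {U : b | (U : Set ((Fin n → ℝ) × ℝ)) ∩ F.1 = ∅} := by
        rw [hFG]; exact hUG
      exact (Set.eq_empty_iff_forall_notMem.mp this x) ⟨hxU, hxF⟩
    intro F G hFG
    exact Subtype.ext ((key F G hFG).antisymm (key G F hFG.symm))
  have h1 : #(ClosedUnc n) ≤ #(Set b) := mk_le_of_injective hinj
  have h2 : #(Set b) = 2 ^ #b := mk_set
  have h3 : #b ≤ ℵ₀ := by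
    have := hbc.to_subtype
    exact mk_le_aleph0
  calc #(ClosedUnc n) ≤ 2 ^ #b := h1.trans_eq h2
    _ ≤ 2 ^ ℵ₀ := by
        exact power_le_power_left (by norm_num) h3
    _ = 𝔠 := two_power_aleph0

end Stmt15Aux

open Stmt15Aux in
/-- For every `n ≥ 1`, the class `J(ℝⁿ)` of Jones functions is `2^𝔠`-spaceable with
respect to the topology of pointwise convergence. -/
theorem stmt15 (n : ℕ) (hn : 1 ≤ n) :
    ∃ V : Submodule ℝ ((Fin n → ℝ) → ℝ),
      IsClosed (V : Set ((Fin n → ℝ) → ℝ)) ∧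
      Module.rank ℝ V = 2 ^ Cardinal.continuum ∧
      ∀ f ∈ V, f ≠ 0 → JonesFn f := by
  classical
  -- `ℝⁿ` is uncountable
  have hXunc : ¬ (Set.univ : Set (Fin n → ℝ)).Countable := by
    rw [Set.countable_univ_iff]
    intro hcnt
    have hinj : Function.Injective (fun r : ℝ => (fun _ : Fin n => r)) := by
      intro a b hab
      exact congrFun hab ⟨0, hn⟩
    have : Countable ℝ := hinj.countable
    exact Cardinal.not_countable_real (@Set.countable_univ ℝ this)
  -- a distinguished closed set with uncountable projection
  obtain ⟨F0, hF0⟩ : ∃ F0 : ClosedUnc n, F0.1 = Set.univ ×ˢ ({1} : Set ℝ) := by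
    refine ⟨⟨Set.univ ×ˢ ({1} : Set ℝ), isClosed_univ.prod isClosed_singleton, ?_⟩, rfl⟩
    rw [Set.fst_image_prod _ (Set.singleton_nonempty (1:ℝ))]
    exact hXunc
  -- a surjective enumeration of all triples by the initial ordinal of `𝔠`
  haveI hTne : Nonempty (ℝ × ℝ × ClosedUnc n) := ⟨(0, 0, F0)⟩
  have hTle : #(ℝ × ℝ × ClosedUnc n) ≤ 𝔠 := by
    have h1 := mk_closedUnc_le n
    have h2 : #(ℝ × ℝ × ClosedUnc n) ≤ 𝔠 * (𝔠 * 𝔠) := by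
      rw [mk_prod, mk_prod]
      simp only [Cardinal.lift_id, mk_real]
      exact mul_le_mul' le_rfl (mul_le_mul' le_rfl h1)
    simpa [mul_eq_self aleph0_le_continuum] using h2
  have hle : #(ℝ × ℝ × ClosedUnc n) ≤ #(continuum.ord.ToType) := by
    rw [mk_toType, card_ord]
    exact hTle
  obtain ⟨emb⟩ := (Cardinal.le_def _ _).mp hle
  have hesurj : Function.Surjective (Function.invFun emb) :=
    Function.invFun_surjective emb.injective
  set e : continuum.ord.ToType → ℝ × ℝ × ClosedUnc n := Function.invFun emb with he
  -- transfinite choice of distinct representatives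
  obtain ⟨pick, hpinj, hpmem⟩ := exists_injective_choice e
    (fun τ => Prod.fst '' τ.2.2.1)
    (fun τ => continuum_le_mk_proj n τ.2.2.1 τ.2.2.2.1 τ.2.2.2.2)
  have hy' : ∀ i, ∃ yv : ℝ, (pick i, yv) ∈ (e i).2.2.1 := by
    intro i
    obtain ⟨p, hp, hfst⟩ := hpmem i
    exact ⟨p.2, by rw [← hfst]; simpa using hp⟩
  choose y hy using hy'
  -- the coding function Φ
  obtain ⟨Φ, hΦ⟩ : ∃ Φ : (Fin n → ℝ) → ℝ × ℝ,
      ∀ i, Φ (pick i) = ((e i).1, y i / (e i).2.1) := by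
    refine ⟨fun z => if h : ∃ i, pick i = z
      then ((e h.choose).1, y h.choose / (e h.choose).2.1) else (0, 0), ?_⟩
    intro i
    have hex : ∃ j, pick j = pick i := ⟨i, rfl⟩
    have h2 : hex.choose = i := hpinj hex.choose_spec
    beta_reduce
    rw [dif_pos hex, h2]
  -- the key hitting property
  have key : ∀ (a t : ℝ) (F : ClosedUnc n), t ≠ 0 →
      ∃ z, (Φ z).1 = a ∧ (z, (Φ z).2 * t) ∈ F.1 := by
    intro a t F ht
    obtain ⟨i, hi⟩ := hesurj (a, t, F)
    have h2 := hy i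
    rw [hi] at h2
    refine ⟨pick i, ?_, ?_⟩
    · rw [hΦ i, hi]
    · rw [hΦ i, hi]
      simp only
      rw [div_mul_cancel₀ _ ht]
      simpa using h2
  -- the subspace
  let V : Submodule ℝ ((Fin n → ℝ) → ℝ) :=
    { carrier := {f | (∀ z, (Φ z).2 = 0 → f z = 0) ∧
        ∀ z w, (Φ z).1 = (Φ w).1 → (Φ w).2 * f z = (Φ z).2 * f w}
      add_mem' := by
        rintro f g ⟨hf1, hf2⟩ ⟨hg1, hg2⟩
        refine ⟨fun z hz => ?_, fun z w hzw => ?_⟩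
        · show f z + g z = 0
          rw [hf1 z hz, hg1 z hz, add_zero]
        · show (Φ w).2 * (f z + g z) = (Φ z).2 * (f w + g w)
          rw [mul_add, mul_add, hf2 z w hzw, hg2 z w hzw]
      zero_mem' := by
        refine ⟨fun z _ => rfl, fun z w _ => ?_⟩
        show (Φ w).2 * 0 = (Φ z).2 * 0
        rw [mul_zero, mul_zero]
      smul_mem' := by
        rintro c f ⟨hf1, hf2⟩
        refine ⟨fun z hz => ?_, fun z w hzw => ?_⟩
        · show c * f z = 0
          rw [hf1 z hz, mul_zero]
        · show (Φ w).2 * (c * f z) = (Φ z).2 * (c * f w)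
          rw [mul_left_comm, hf2 z w hzw, mul_left_comm] }
  have hmemV : ∀ f, f ∈ V ↔ ((∀ z, (Φ z).2 = 0 → f z = 0) ∧
      ∀ z w, (Φ z).1 = (Φ w).1 → (Φ w).2 * f z = (Φ z).2 * f w) := fun f => Iff.rfl
  -- the parametrizing linear map
  let Tm : (ℝ → ℝ) →ₗ[ℝ] ((Fin n → ℝ) → ℝ) :=
    { toFun := fun h => fun z => (Φ z).2 * h ((Φ z).1)
      map_add' := fun h1 h2 => by funext z; simp [mul_add]
      map_smul' := fun c h => by funext z; simp [smul_eq_mul]; ring }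
  have hTmapply : ∀ (h : ℝ → ℝ) z, Tm h z = (Φ z).2 * h ((Φ z).1) := fun _ _ => rfl
  have hinjT : Function.Injective Tm := by
    rw [injective_iff_map_eq_zero]
    intro h hh0
    by_contra hne
    obtain ⟨a, ha⟩ : ∃ a, h a ≠ 0 := by
      by_contra hall
      push_neg at hall
      exact hne (funext hall)
    obtain ⟨z, hz1, hz2⟩ := key a (h a) F0 ha
    rw [hF0] at hz2
    have h1 : (1:ℝ) = (Φ z).2 * h a := (by simpa using hz2 : (Φ z).2 * h a = 1).symm
    have h0 : Tm h z = 0 := by rw [hh0]; rfl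
    rw [hTmapply, hz1, ← h1] at h0
    exact one_ne_zero h0
  have hrange : LinearMap.range Tm = V := by
    apply le_antisymm
    · rintro f ⟨h, rfl⟩
      rw [hmemV]
      refine ⟨fun z hz => ?_, fun z w hzw => ?_⟩
      · rw [hTmapply, hz, zero_mul]
      · rw [hTmapply, hTmapply, hzw]
        ring
    · intro f hf
      obtain ⟨hf1, hf2⟩ := (hmemV f).mp hf
      refine ⟨fun a => if hz : ∃ w, (Φ w).1 = a ∧ (Φ w).2 ≠ 0
        then f hz.choose / (Φ hz.choose).2 else 0, ?_⟩
      funext z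
      rw [hTmapply]
      by_cases h0 : (Φ z).2 = 0
      · rw [h0, zero_mul, hf1 z h0]
      · have hex : ∃ w, (Φ w).1 = (Φ z).1 ∧ (Φ w).2 ≠ 0 := ⟨z, rfl, h0⟩
        rw [dif_pos hex]
        obtain ⟨hw1, hw2⟩ := hex.choose_spec
        have h3 := hf2 z hex.choose hw1.symm
        field_simp
        linear_combination -h3
  refine ⟨V, ?_, ?_, ?_⟩
  · -- closedness
    have hC1 : IsClosed {f : (Fin n → ℝ) → ℝ | ∀ z, (Φ z).2 = 0 → f z = 0} := by
      have heq : {f : (Fin n → ℝ) → ℝ | ∀ z, (Φ z).2 = 0 → f z = 0} =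
          ⋂ z, ⋂ (_ : (Φ z).2 = 0), {f : (Fin n → ℝ) → ℝ | f z = 0} := by
        ext f
        simp
      rw [heq]
      exact isClosed_iInter fun z => isClosed_iInter fun _ =>
        isClosed_eq (continuous_apply z) continuous_const
    have hC2 : IsClosed {f : (Fin n → ℝ) → ℝ |
        ∀ z w, (Φ z).1 = (Φ w).1 → (Φ w).2 * f z = (Φ z).2 * f w} := by
      have heq : {f : (Fin n → ℝ) → ℝ |
          ∀ z w, (Φ z).1 = (Φ w).1 → (Φ w).2 * f z = (Φ z).2 * f w} =
          ⋂ z, ⋂ w, ⋂ (_ : (Φ z).1 = (Φ w).1),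
            {f : (Fin n → ℝ) → ℝ | (Φ w).2 * f z = (Φ z).2 * f w} := by
        ext f
        simp
      rw [heq]
      exact isClosed_iInter fun z => isClosed_iInter fun w => isClosed_iInter fun _ =>
        isClosed_eq (continuous_const.mul (continuous_apply z))
          (continuous_const.mul (continuous_apply w))
    have hVeq : (V : Set ((Fin n → ℝ) → ℝ)) =
        {f : (Fin n → ℝ) → ℝ | ∀ z, (Φ z).2 = 0 → f z = 0} ∩
        {f : (Fin n → ℝ) → ℝ |
          ∀ z w, (Φ z).1 = (Φ w).1 → (Φ w).2 * f z = (Φ z).2 * f w} := rfl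
    rw [hVeq]
    exact hC1.inter hC2
  · -- rank
    have h1 : Module.rank ℝ (ℝ → ℝ) = Module.rank ℝ (LinearMap.range Tm) :=
      (LinearEquiv.ofInjective Tm hinjT).rank_eq
    rw [hrange] at h1
    rw [← h1, rank_fun_infinite, mk_arrow, mk_real]
    simp [power_self_eq aleph0_le_continuum]
  · -- Jones
    intro f hf hf0
    have hfR : f ∈ LinearMap.range Tm := by
      rw [hrange]
      exact hf
    obtain ⟨h, rfl⟩ := hfR
    have hh0 : h ≠ 0 := by
      rintro rfl
      exact hf0 (map_zero Tm)
    obtain ⟨a, ha⟩ : ∃ a, h a ≠ 0 := by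
      by_contra hall
      push_neg at hall
      exact hh0 (funext hall)
    intro F hFc hFunc
    obtain ⟨z, hz1, hz2⟩ := key a (h a) ⟨F, hFc, hFunc⟩ ha
    refine ⟨z, ?_⟩
    have h4 : Tm h z = (Φ z).2 * h a := by rw [hTmapply, hz1]
    rw [h4]
    exact hz2
end

section
/- For every n ≥ 1, if Z is a linear subspace of the real vector space of all functions from ℝⁿ to ℝ such that every nonzero element of Z is injective, then dim(Z) ≤ 1. In other words, the family of one-to-one functions from ℝⁿ to ℝ is 1-lineable but not 2-lineable. -/
set_option synthInstance.maxHeartbeats 1000000 in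
/-- The family of one-to-one functions from `ℝⁿ` to `ℝ` is `1`-lineable but not
`2`-lineable: any linear subspace all of whose nonzero elements are injective has
dimension at most `1`. -/
theorem stmt16 (n : ℕ) (hn : 1 ≤ n)
    (Z : Submodule ℝ ((Fin n → ℝ) → ℝ))
    (hZ : ∀ f ∈ Z, f ≠ 0 → Function.Injective f) :
    Module.rank ℝ Z ≤ 1 := by
  rw [rank_le_one_iff]
  set a : Fin n → ℝ := fun _ => 0 with ha
  set b : Fin n → ℝ := fun _ => 1 with hb
  have hab : a ≠ b := by
    intro h
    have := congrFun h ⟨0, hn⟩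
    simp [ha, hb] at this
  by_cases hbot : ∀ f ∈ Z, f = (0 : (Fin n → ℝ) → ℝ)
  · refine ⟨0, fun v => ⟨0, ?_⟩⟩
    have : (v : (Fin n → ℝ) → ℝ) = 0 := hbot v v.2
    ext
    simp [this]
  · push_neg at hbot
    obtain ⟨g, hgZ, hg0⟩ := hbot
    have hginj : Function.Injective g := hZ g hgZ hg0
    have hgab : g a - g b ≠ 0 := sub_ne_zero.mpr (fun h => hab (hginj h))
    refine ⟨⟨g, hgZ⟩, fun v => ?_⟩
    set f : (Fin n → ℝ) → ℝ := v.1 with hf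
    by_cases hf0 : f = 0
    · refine ⟨0, ?_⟩
      ext x
      rw [show (v : (Fin n → ℝ) → ℝ) = 0 from hf0]
      simp
    · set r : ℝ := (f a - f b) / (g a - g b) with hr
      have hmem : f - r • g ∈ Z := Z.sub_mem v.2 (Z.smul_mem r hgZ)
      have heq : (f - r • g) a = (f - r • g) b := by
        simp only [Pi.sub_apply, Pi.smul_apply, smul_eq_mul, hr]
        field_simp
        ring
      have hzero : f - r • g = 0 := by
        by_contra h
        exact hab (hZ _ hmem h heq)
      refine ⟨r, ?_⟩
      ext x
      have := congrFun hzero x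
      simp only [Pi.sub_apply, Pi.smul_apply, Pi.zero_apply, smul_eq_mul, sub_eq_zero] at this
      simpa [hf] using this.symm
end

section
/- For every n ≥ 2, no function f : ℝⁿ → ℝ is both perfectly everywhere surjective and Darboux; that is, PES(ℝⁿ) ∩ D(ℝⁿ) = ∅. -/
/-- `f : ℝⁿ → ℝ` is perfectly everywhere surjective if `f '' P = ℝ` for every
perfect (nonempty, closed, without isolated points) set `P ⊆ ℝⁿ`. -/
def PerfectlyEverywhereSurjective {n : ℕ} (f : (Fin n → ℝ) → ℝ) : Prop :=
  ∀ P : Set (Fin n → ℝ), Perfect P → P.Nonempty → f '' P = Set.univ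

/-- `f : ℝⁿ → ℝ` is Darboux if it maps connected sets onto connected sets. -/
def DarbouxFn {n : ℕ} (f : (Fin n → ℝ) → ℝ) : Prop :=
  ∀ K : Set (Fin n → ℝ), IsPreconnected K → IsPreconnected (f '' K)

section Aux

variable {n : ℕ}

lemma aux_nontrivial (hn : 2 ≤ n) : Nontrivial (Fin n → ℝ) := by
  have : Nonempty (Fin n) := ⟨⟨0, by omega⟩⟩
  infer_instance

/-- Any nonempty open set in `ℝⁿ` (n ≥ 2) contains a nonempty perfect subset. -/
lemma open_contains_perfect (hn : 2 ≤ n) {U : Set (Fin n → ℝ)} (hU : IsOpen U)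
    (hne : U.Nonempty) : ∃ P : Set (Fin n → ℝ), Perfect P ∧ P.Nonempty ∧ P ⊆ U := by
  haveI := aux_nontrivial hn
  haveI : ∀ x : Fin n → ℝ, Filter.NeBot (nhdsWithin x {x}ᶜ) :=
    fun x => Module.punctured_nhds_neBot ℝ _ x
  obtain ⟨c, hc⟩ := hne
  obtain ⟨r, hr, hball⟩ := Metric.isOpen_iff.1 hU c hc
  have hpre : Preperfect (Metric.ball c (r / 2)) := by
    rw [preperfect_iff_nhds]
    intro x hx V hV
    have hmem : (V ∩ Metric.ball c (r / 2)) \ {x} ∈ nhdsWithin x {x}ᶜ := by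
      rw [Set.diff_eq, nhdsWithin]
      exact Filter.inter_mem_inf
        (Filter.inter_mem hV (Metric.isOpen_ball.mem_nhds hx)) (Filter.mem_principal_self _)
    obtain ⟨y, hy⟩ := Filter.nonempty_of_mem hmem
    exact ⟨y, hy.1, hy.2⟩
  refine ⟨closure (Metric.ball c (r / 2)), hpre.perfect_closure, ⟨c, subset_closure
    (Metric.mem_ball_self (by linarith))⟩, ?_⟩
  calc closure (Metric.ball c (r / 2)) ⊆ Metric.closedBall c (r / 2) :=
        Metric.closure_ball_subset_closedBall
    _ ⊆ Metric.ball c r := Metric.closedBall_subset_ball (by linarith)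
    _ ⊆ U := hball

/-- A set in `ℝⁿ` (n ≥ 2) meeting every nonempty perfect set is preconnected. -/
lemma preconnected_of_meets_perfect (hn : 2 ≤ n) {s : Set (Fin n → ℝ)}
    (hs : ∀ P : Set (Fin n → ℝ), Perfect P → P.Nonempty → (s ∩ P).Nonempty) :
    IsPreconnected s := by
  intro u v hu hv hsuv ⟨x, hxs, hxu⟩ ⟨y, hys, hyv⟩
  by_contra hcon
  -- the complement of `u ∪ v` is closed and disjoint from `s`, hence contains no perfect
  -- set, hence is countable by Cantor–Bendixson.
  have hFdisj : ((u ∪ v)ᶜ ∩ s) = ∅ := by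
    rw [Set.eq_empty_iff_forall_notMem]
    rintro z ⟨hz1, hz2⟩
    exact hz1 (hsuv hz2)
  have hFcount : Set.Countable (u ∪ v)ᶜ := by
    by_contra hF
    obtain ⟨D, hD, hDne, hDsub⟩ :=
      exists_perfect_nonempty_of_isClosed_of_not_countable ((hu.union hv).isClosed_compl) hF
    obtain ⟨w, hws, hwD⟩ := hs D hD hDne
    exact (Set.eq_empty_iff_forall_notMem.1 hFdisj w) ⟨hDsub hwD, hws⟩
  -- hence `u ∪ v` is connected, so `u ∩ v` is nonempty open
  have hrank : 1 < Module.rank ℝ (Fin n → ℝ) := by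
    rw [rank_fin_fun]
    exact_mod_cast by omega
  have hconn : IsConnected ((u ∪ v)ᶜᶜ) :=
    Set.Countable.isConnected_compl_of_one_lt_rank hrank hFcount
  rw [compl_compl] at hconn
  obtain ⟨z, -, hzu, hzv⟩ := hconn.isPreconnected u v hu hv (subset_refl _)
    ⟨x, Set.mem_union_left _ hxu, hxu⟩ ⟨y, Set.mem_union_right _ hyv, hyv⟩
  -- `u ∩ v` is nonempty open, so it contains a perfect set, which meets `s`
  obtain ⟨P, hP, hPne, hPsub⟩ := open_contains_perfect hn (hu.inter hv) ⟨z, hzu, hzv⟩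
  obtain ⟨w, hws, hwP⟩ := hs P hP hPne
  exact hcon ⟨w, hws, hPsub hwP⟩

lemma perfect_univ (hn : 2 ≤ n) : Perfect (Set.univ : Set (Fin n → ℝ)) := by
  haveI := aux_nontrivial hn
  haveI : ∀ x : Fin n → ℝ, Filter.NeBot (nhdsWithin x {x}ᶜ) :=
    fun x => Module.punctured_nhds_neBot ℝ _ x
  refine ⟨isClosed_univ, fun x _ => ?_⟩
  rw [AccPt]
  simpa using this x

end Aux

/-- For `n ≥ 2`, no function `f : ℝⁿ → ℝ` is both perfectly everywhere surjective
and Darboux. -/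
theorem stmt17 (n : ℕ) (hn : 2 ≤ n) (f : (Fin n → ℝ) → ℝ) :
    ¬ (PerfectlyEverywhereSurjective f ∧ DarbouxFn f) := by
  rintro ⟨hPES, hD⟩
  set s : Set (Fin n → ℝ) := (f ⁻¹' Set.Ioo 0 1)ᶜ with hs_def
  have hmeets : ∀ P : Set (Fin n → ℝ), Perfect P → P.Nonempty → (s ∩ P).Nonempty := by
    intro P hP hPne
    have h0 : (0 : ℝ) ∈ f '' P := by rw [hPES P hP hPne]; trivial
    obtain ⟨x, hxP, hfx⟩ := h0
    refine ⟨x, ?_, hxP⟩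
    simp [hs_def, Set.mem_Ioo, hfx]
  have hsconn : IsPreconnected s := preconnected_of_meets_perfect hn hmeets
  have himg : IsPreconnected (f '' s) := hD s hsconn
  -- `0` and `1` are in the image, but `1/2` is not
  have huniv := hPES Set.univ (perfect_univ hn) ⟨fun _ => 0, trivial⟩
  have h0 : (0 : ℝ) ∈ f '' s := by
    have : (0 : ℝ) ∈ f '' Set.univ := by rw [huniv]; trivial
    obtain ⟨x, -, hfx⟩ := this
    exact ⟨x, by simp [hs_def, hfx], hfx⟩
  have h1 : (1 : ℝ) ∈ f '' s := by
    have : (1 : ℝ) ∈ f '' Set.univ := by rw [huniv]; trivial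
    obtain ⟨x, -, hfx⟩ := this
    exact ⟨x, by simp [hs_def, hfx], hfx⟩
  have hhalf : (1 / 2 : ℝ) ∈ f '' s :=
    himg.Icc_subset h0 h1 ⟨by norm_num, by norm_num⟩
  obtain ⟨x, hxs, hfx⟩ := hhalf
  exact hxs (by simp [hfx]; norm_num)
end

section
/- For every n ≥ 2, every Jones function f : ℝⁿ → ℝ is almost continuous but not Darboux; that is, J(ℝⁿ) ⊆ AC(ℝⁿ) \ D(ℝⁿ). -/
open Cardinal


/-- `f : ℝⁿ → ℝ` is almost continuous (in the sense of Stallings) if every open set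
`U ⊆ ℝⁿ × ℝ` containing the graph of `f` contains the graph of a continuous function. -/
def AlmostContinuous {n : ℕ} (f : (Fin n → ℝ) → ℝ) : Prop :=
  ∀ U : Set ((Fin n → ℝ) × ℝ), IsOpen U → (∀ x, (x, f x) ∈ U) →
    ∃ g : (Fin n → ℝ) → ℝ, Continuous g ∧ ∀ x, (x, g x) ∈ U

section Construction

open Metric Set Filter

variable {n : ℕ}

lemma uncountable_Ioo {a b : ℝ} (h : a < b) : ¬ (Set.Ioo a b).Countable := by
  intro hc
  have h1 : #(Set.Ioo a b) ≤ ℵ₀ := Cardinal.le_aleph0_iff_set_countable.mpr hc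
  rw [Cardinal.mk_Ioo_real h] at h1
  exact Cardinal.aleph0_lt_continuum.not_ge h1

lemma exists_Icc_subset {R : ℝ} (hR : 0 < R) {S : Set ℝ} (hS : IsClosed S) (hSc : S.Countable) :
    ∃ a b : ℝ, 0 < a ∧ a < b ∧ b < R ∧ ∀ t, a ≤ t → t ≤ b → t ∉ S := by
  have hns : ¬ (Set.Ioo 0 R ⊆ S) := fun hsub => uncountable_Ioo hR (hSc.mono hsub)
  obtain ⟨t, htI, htS⟩ := Set.not_subset.mp hns
  have hopen : IsOpen (Set.Ioo 0 R ∩ Sᶜ) := isOpen_Ioo.inter hS.isOpen_compl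
  obtain ⟨ε, hε, hball⟩ := Metric.isOpen_iff.mp hopen t ⟨htI, htS⟩
  refine ⟨t, t + ε/2, htI.1, by linarith, ?_, ?_⟩
  · have : t + ε/2 ∈ Set.Ioo 0 R ∩ Sᶜ := by
      apply hball
      rw [mem_ball, Real.dist_eq]
      rw [abs_of_nonneg (by linarith : (0:ℝ) ≤ t + ε/2 - t)]
      linarith
    exact this.1.2
  · intro s hs1 hs2 hsS
    have : s ∈ Set.Ioo 0 R ∩ Sᶜ := by
      apply hball
      rw [mem_ball, Real.dist_eq, abs_lt]
      constructor <;> linarith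
    exact this.2 hsS


lemma isClosed_lowSet {K : Set ((Fin n → ℝ) × ℝ)} (hK : IsClosed K) (M : ℝ) :
    IsClosed {x : Fin n → ℝ | ∃ y, (x, y) ∈ K ∧ |y| ≤ M} := by
  apply IsSeqClosed.isClosed
  intro u p hu hup
  choose v hv hvM using hu
  have hb : ∀ k, v k ∈ Set.Icc (-M) M := fun k => abs_le.mp (hvM k)
  obtain ⟨yy, hyy, φ, hφ, hφt⟩ := tendsto_subseq_of_bounded (isBounded_Icc (-M) M) hb
  have hyyI : yy ∈ Set.Icc (-M) M := by rwa [isClosed_Icc.closure_eq] at hyy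
  refine ⟨yy, ?_, abs_le.mpr hyyI⟩
  have ht : Tendsto (fun k => (u (φ k), v (φ k))) atTop (nhds (p, yy)) :=
    ((hup.comp hφ.tendsto_atTop).prodMk_nhds hφt)
  exact hK.mem_of_tendsto ht (Filter.Eventually.of_forall fun k => hv _)

lemma band_lemma {K : Set ((Fin n → ℝ) × ℝ)} (hK : IsClosed K)
    (hKc : (Prod.fst '' K).Countable) {T : Set (Fin n → ℝ)} (hTc : IsCompact T)
    (hTne : T.Nonempty) {R : ℝ} (hR : 0 < R) (W : ℝ) :
    ∃ a b : ℝ, 0 < a ∧ a < b ∧ b < R ∧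
      ∀ z y', a ≤ infDist z T → infDist z T ≤ b → (z, y') ∈ K → W < |y'| := by
  obtain ⟨t0, ht0⟩ := hTne
  obtain ⟨r0, hr0⟩ : ∃ r0, T ⊆ closedBall t0 r0 := hTc.isBounded.subset_closedBall t0
  set Z : Set (Fin n → ℝ) := {x | ∃ y, (x, y) ∈ K ∧ |y| ≤ W} with hZ
  have hZclosed : IsClosed Z := isClosed_lowSet hK W
  have hZcount : Z.Countable := hKc.mono (by
    rintro x ⟨y, hxy, -⟩
    exact ⟨(x, y), hxy, rfl⟩)
  set A : Set (Fin n → ℝ) := Z ∩ {z | infDist z T ≤ R} with hA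
  have hAclosed : IsClosed A :=
    hZclosed.inter (isClosed_le (continuous_infDist_pt T) continuous_const)
  have hAbdd : A ⊆ closedBall t0 (R + 1 + r0) := by
    rintro z ⟨-, hz2⟩
    have : infDist z T < R + 1 := lt_of_le_of_lt hz2 (by linarith)
    obtain ⟨t, htT, htd⟩ := (infDist_lt_iff ⟨t0, ht0⟩).mp this
    have := hr0 htT
    rw [mem_closedBall] at this ⊢
    calc dist z t0 ≤ dist z t + dist t t0 := dist_triangle _ _ _
      _ ≤ R + 1 + r0 := by linarith
  have hAcomp : IsCompact A :=
    isCompact_of_isClosed_isBounded hAclosed ((isBounded_closedBall).subset hAbdd)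
  set S : Set ℝ := (fun z => infDist z T) '' A with hS
  have hScomp : IsCompact S := hAcomp.image (continuous_infDist_pt T)
  have hScount : S.Countable := (hZcount.mono Set.inter_subset_left).image _
  obtain ⟨a, b, ha, hab, hbR, havoid⟩ := exists_Icc_subset hR hScomp.isClosed hScount
  refine ⟨a, b, ha, hab, hbR, ?_⟩
  intro z y' h1 h2 hzy
  by_contra hW
  push_neg at hW
  have hzZ : z ∈ Z := ⟨y', hzy, hW⟩
  have hzA : z ∈ A := ⟨hzZ, le_trans h2 (le_of_lt hbR)⟩
  exact havoid _ h1 h2 ⟨z, hzA, rfl⟩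

lemma safe_box {K : Set ((Fin n → ℝ) × ℝ)} (hK : IsClosed K)
    (hsl : ∀ x : Fin n → ℝ, ∃ y, (x, y) ∉ K) (x : Fin n → ℝ) :
    ∃ δ : ℝ, 0 < δ ∧ ∃ y, ∀ x' ∈ closedBall x (2 * δ), (x', y) ∉ K := by
  obtain ⟨y, hy⟩ := hsl x
  obtain ⟨ε, hε, hball⟩ := Metric.isOpen_iff.mp hK.isOpen_compl (x, y) hy
  refine ⟨ε/8, by linarith, y, ?_⟩
  intro x' hx'
  apply hball
  rw [mem_ball, Prod.dist_eq]
  rw [mem_closedBall] at hx'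
  rw [dist_self y]
  exact max_lt (by linarith [hx']) hε

lemma cover_ex {K : Set ((Fin n → ℝ) × ℝ)} (hK : IsClosed K)
    (hsl : ∀ x : Fin n → ℝ, ∃ y, (x, y) ∉ K) :
    ∃ (c : ℕ → Fin n → ℝ) (R : ℕ → ℝ) (y : ℕ → ℝ),
      (∀ i, R i ≤ 4⁻¹) ∧ (∀ i, 0 < R i ∨ R i = -1) ∧
      (∀ i, 0 < R i → ∀ x' ∈ closedBall (c i) (2 * R i), (x', y i) ∉ K) ∧
      (∀ z, ∃ i, 0 < R i ∧ z ∈ ball (c i) (R i)) ∧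
      (∀ ρ : ℝ, {i : ℕ | 0 < R i ∧ ‖c i‖ ≤ ρ}.Finite) := by
  classical
  choose δf hδf yf hyf using safe_box hK hsl
  set r : (Fin n → ℝ) → ℝ := fun x => min (δf x) 4⁻¹ with hr
  have hrpos : ∀ x, 0 < r x := fun x => lt_min (hδf x) (by norm_num)
  have hrle : ∀ x, r x ≤ 4⁻¹ := fun x => min_le_right _ _
  have hrsafe : ∀ x, ∀ x' ∈ closedBall x (2 * r x), (x', yf x) ∉ K := by
    intro x x' hx'
    refine hyf x x' (closedBall_subset_closedBall ?_ hx')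
    have : r x ≤ δf x := min_le_left _ _
    linarith
  set C : ℕ → Set (Fin n → ℝ) := fun m => closedBall 0 (m + 1) \ ball 0 m with hC
  have hCcl : ∀ m, IsClosed (C m) :=
    fun m => (isClosed_closedBall).inter (isOpen_ball).isClosed_compl
  have hCcomp : ∀ m, IsCompact (C m) := fun m =>
    (isCompact_closedBall (0 : Fin n → ℝ) (m + 1)).of_isClosed_subset (hCcl m)
      Set.diff_subset
  have hsub : ∀ m : ℕ, ∃ l : List (Fin n → ℝ),
      (∀ p ∈ l, p ∈ C m) ∧ ∀ z ∈ C m, ∃ p ∈ l, z ∈ ball p (r p) := by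
    intro m
    obtain ⟨t, htc⟩ := (hCcomp m).elim_finite_subcover
      (fun p : ↥(C m) => ball (p : Fin n → ℝ) (r p)) (fun _ => isOpen_ball)
      (fun z hz => Set.mem_iUnion.mpr ⟨⟨z, hz⟩, mem_ball_self (hrpos z)⟩)
    refine ⟨t.toList.map Subtype.val, ?_, ?_⟩
    · intro p hp
      obtain ⟨q, -, rfl⟩ := List.mem_map.mp hp
      exact q.2
    · intro z hz
      obtain ⟨q, hqt, hzq⟩ := Set.mem_iUnion₂.mp (htc hz)
      exact ⟨↑q, List.mem_map_of_mem (Finset.mem_toList.mpr hqt), hzq⟩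
  choose L hLmem hLcov using hsub
  set dat : ℕ → Option (Fin n → ℝ) := fun i => (L (Nat.unpair i).1)[(Nat.unpair i).2]? with hdat
  refine ⟨fun i => (dat i).getD 0,
          fun i => ((dat i).map r).getD (-1),
          fun i => ((dat i).map yf).getD 0, ?_, ?_, ?_, ?_, ?_⟩
  · intro i
    rcases h : dat i with _ | p <;> simp [h]
    · norm_num
    · exact hrle p
  · intro i
    rcases h : dat i with _ | p <;> simp [h]
    exact Or.inl (hrpos _)
  · intro i hpos x' hx'
    rcases h : dat i with _ | p
    · simp [h] at hpos; linarith
    · simp only [h, Option.map_some, Option.getD_some] at hpos hx' ⊢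
      exact hrsafe _ _ hx'
  · intro z
    set m : ℕ := ⌊‖z‖⌋₊ with hm
    have hzC : z ∈ C m := by
      constructor
      · rw [mem_closedBall, dist_zero_right]
        have := Nat.lt_floor_add_one ‖z‖
        push_cast
        linarith
      · rw [mem_ball, dist_zero_right]
        push_neg
        exact_mod_cast Nat.floor_le (norm_nonneg z)
    obtain ⟨p, hpl, hzp⟩ := hLcov m z hzC
    obtain ⟨k, hk⟩ := List.mem_iff_getElem?.mp hpl
    refine ⟨Nat.pair m k, ?_⟩
    have hdk : dat (Nat.pair m k) = some p := by
      simp only [hdat, Nat.unpair_pair]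
      exact hk
    simp only [hdk, Option.map_some, Option.getD_some]
    exact ⟨hrpos p, hzp⟩
  · intro ρ
    by_cases hρ : 0 ≤ ρ
    · set F : Finset ℕ := Finset.range (⌈ρ⌉₊ + 1) with hF
      set Mx : ℕ := F.sup (fun m => (L m).length) with hMx
      apply Set.Finite.subset (Set.finite_mem_finset ((F ×ˢ Finset.range Mx).image
        fun q : ℕ × ℕ => Nat.pair q.1 q.2))
      rintro i ⟨hipos, hinorm⟩
      rcases h : dat i with _ | p
      · simp [h] at hipos; linarith
      · have hkl : (Nat.unpair i).2 < (L (Nat.unpair i).1).length := by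
          have := h
          simp only [hdat] at this
          exact (List.getElem?_eq_some_iff.mp this).1
        have hpc : p ∈ C (Nat.unpair i).1 := by
          apply hLmem
          have := h
          simp only [hdat] at this
          exact List.mem_of_getElem? this
        have hnorm : ((Nat.unpair i).1 : ℝ) ≤ ‖p‖ := by
          have := hpc.2
          rw [mem_ball, dist_zero_right] at this
          push_neg at this
          exact this
        simp only [h, Option.getD_some] at hinorm
        have hm1 : (Nat.unpair i).1 ∈ F := by
          rw [hF, Finset.mem_range]
          have h1 : ((Nat.unpair i).1 : ℝ) ≤ ρ := le_trans hnorm hinorm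
          have h2 : ((Nat.unpair i).1 : ℝ) ≤ (⌈ρ⌉₊ : ℝ) := le_trans h1 (Nat.le_ceil ρ)
          have := Nat.cast_le.mp h2
          omega
        simp only [Finset.mem_coe, Finset.mem_image, Finset.mem_product, Finset.mem_range]
        refine ⟨((Nat.unpair i).1, (Nat.unpair i).2), ⟨hm1, ?_⟩, Nat.pair_unpair i⟩
        calc (Nat.unpair i).2 < (L (Nat.unpair i).1).length := hkl
          _ ≤ Mx := Finset.le_sup (f := fun m => (L m).length) hm1
    · apply Set.Finite.subset (Set.finite_empty)
      rintro i ⟨-, hinorm⟩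
      exact hρ (le_trans (norm_nonneg _) hinorm)

theorem omission {K : Set ((Fin n → ℝ) × ℝ)} (hK : IsClosed K)
    (hKc : (Prod.fst '' K).Countable) (hsl : ∀ x : Fin n → ℝ, ∃ y, (x, y) ∉ K) :
    ∃ g : (Fin n → ℝ) → ℝ, Continuous g ∧ ∀ x, (x, g x) ∉ K := by
  classical
  obtain ⟨c, R, y, hR4, hRpos, hsafe, hcov, hfin⟩ := cover_ex hK hsl
  set T : ℕ → Set (Fin n → ℝ) :=
    fun i => closedBall (c i) (R i) \ ⋃ j ∈ Finset.range i, ball (c j) (R j) with hT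
  have step : ∀ (i : ℕ) (h : C(Fin n → ℝ, ℝ)), ∃ h' : C(Fin n → ℝ, ℝ),
      (∀ z, z ∉ closedBall (c i) (2 * R i) → h' z = h z) ∧
      (∀ z ∈ T i, h' z = y i ∧ (z, y i) ∉ K) ∧
      (∀ z, h' z = h z ∨ (z, h' z) ∉ K) := by
    intro i h
    by_cases hTne : (T i).Nonempty
    swap
    · exact ⟨h, fun z _ => rfl, fun z hz => absurd ⟨z, hz⟩ hTne, fun z => Or.inl rfl⟩
    have hRi : 0 < R i := by
      rcases hRpos i with h0 | h0
      · exact h0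
      · exfalso
        obtain ⟨z, hz⟩ := hTne
        have h1 := mem_closedBall.mp hz.1
        rw [h0] at h1
        linarith [dist_nonneg (x := z) (y := c i)]
    have hTcl : IsClosed (T i) := by
      have e : T i = closedBall (c i) (R i) ∩ (⋃ j ∈ Finset.range i, ball (c j) (R j))ᶜ :=
        Set.diff_eq _ _
      rw [e]
      exact isClosed_closedBall.inter
        (isOpen_iUnion fun j => isOpen_iUnion fun _ => isOpen_ball).isClosed_compl
    have hTcomp : IsCompact (T i) :=
      (isCompact_closedBall (c i) (R i)).of_isClosed_subset hTcl Set.diff_subset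
    obtain ⟨W0, hW0⟩ := (isCompact_closedBall (c i) (2 * R i)).exists_bound_of_continuousOn
      h.continuous.continuousOn
    set W : ℝ := max W0 |y i| with hWdef
    obtain ⟨a, b, ha, hab, hbR, hband⟩ := band_lemma hK hKc hTcomp hTne hRi W
    set ψ : (Fin n → ℝ) → ℝ := fun z => infDist z (T i) with hψ
    set φ : (Fin n → ℝ) → ℝ := fun z => max 0 (min 1 ((b - ψ z) / (b - a))) with hφ
    have hφcont : Continuous φ := by
      apply continuous_const.max
      apply continuous_const.min
      exact (continuous_const.sub (continuous_infDist_pt _)).div_const _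
    have hφ0 : ∀ z, 0 ≤ φ z := fun z => le_max_left _ _
    have hφ1 : ∀ z, φ z ≤ 1 := fun z => max_le zero_le_one (min_le_left _ _)
    have hsupp : ∀ z, φ z ≠ 0 → z ∈ closedBall (c i) (2 * R i) ∧ ψ z < b := by
      intro z hz
      have hq : 0 < min 1 ((b - ψ z) / (b - a)) := by
        rcases lt_or_ge 0 (min 1 ((b - ψ z) / (b - a))) with h' | h'
        · exact h'
        · exact absurd (max_eq_left h') hz
      have hψb : ψ z < b := by
        have h2 : 0 < (b - ψ z) / (b - a) := lt_of_lt_of_le hq (min_le_right _ _)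
        have hba : (0:ℝ) < b - a := by linarith
        rcases div_pos_iff.mp h2 with ⟨h3, -⟩ | ⟨-, h4⟩
        · linarith
        · linarith
      obtain ⟨t, htT, htd⟩ := (infDist_lt_iff hTne).mp hψb
      have ht2 : t ∈ closedBall (c i) (R i) := htT.1
      rw [mem_closedBall] at ht2 ⊢
      constructor
      · calc dist z (c i) ≤ dist z t + dist t (c i) := dist_triangle _ _ _
          _ ≤ 2 * R i := by linarith
      · exact hψb
    refine ⟨⟨fun z => h z + φ z * (y i - h z),
      h.continuous.add (hφcont.mul (continuous_const.sub h.continuous))⟩, ?_, ?_, ?_⟩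
    · intro z hz
      simp only [ContinuousMap.coe_mk]
      have : φ z = 0 := by
        by_contra h0
        exact hz (hsupp z h0).1
      rw [this]; ring
    · intro z hzT
      have hψ0 : ψ z = 0 := infDist_zero_of_mem hzT
      have hq : (1:ℝ) ≤ (b - ψ z) / (b - a) := by
        rw [hψ0, sub_zero, le_div_iff₀ (by linarith)]
        linarith
      have hφz : φ z = 1 := by
        rw [hφ]
        simp only
        rw [min_eq_left hq]
        exact max_eq_right zero_le_one
      constructor
      · simp only [ContinuousMap.coe_mk]
        rw [hφz]; ring
      · refine hsafe i hRi z (closedBall_subset_closedBall ?_ hzT.1)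
        linarith
    · intro z
      by_cases h0 : φ z = 0
      · left; simp only [ContinuousMap.coe_mk]; rw [h0]; ring
      right
      obtain ⟨hzball, hψb⟩ := hsupp z h0
      by_cases h1 : φ z = 1
      · simp only [ContinuousMap.coe_mk]
        rw [h1]
        have : h z + 1 * (y i - h z) = y i := by ring
        rw [this]
        exact hsafe i hRi z hzball
      -- band case
      have hq1 : (b - ψ z) / (b - a) < 1 := by
        by_contra hq
        push_neg at hq
        apply h1
        rw [hφ]; simp only
        rw [min_eq_left hq]
        exact max_eq_right zero_le_one
      have haψ : a ≤ ψ z := by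
        rw [div_lt_one (by linarith)] at hq1
        linarith
      have hWz : |h z| ≤ W := le_trans (le_of_eq (Real.norm_eq_abs _).symm) (le_trans (hW0 z hzball) (le_max_left _ _))
      have hWy : |y i| ≤ W := le_max_right _ _
      have hval : |h z + φ z * (y i - h z)| ≤ W := by
        have e1 : h z + φ z * (y i - h z) = (1 - φ z) * h z + φ z * y i := by ring
        rw [e1]
        calc |(1 - φ z) * h z + φ z * y i| ≤ |(1 - φ z) * h z| + |φ z * y i| := abs_add_le _ _
          _ = (1 - φ z) * |h z| + φ z * |y i| := by
              rw [abs_mul, abs_mul, abs_of_nonneg (by linarith [hφ1 z]), abs_of_nonneg (hφ0 z)]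
          _ ≤ (1 - φ z) * W + φ z * W := by
              have := hφ0 z; have := hφ1 z
              have hWnn : (0:ℝ) ≤ W := le_trans (abs_nonneg _) hWy
              apply add_le_add
              · exact mul_le_mul_of_nonneg_left hWz (by linarith)
              · exact mul_le_mul_of_nonneg_left hWy (by linarith)
          _ = W := by ring
      intro hmem
      simp only [ContinuousMap.coe_mk] at hmem hval
      exact absurd hval (not_le.mpr (hband z _ haψ (le_of_lt hψb) hmem))
  choose stepF hstep using step
  set G : ℕ → C(Fin n → ℝ, ℝ) :=
    fun i => Nat.rec (ContinuousMap.const _ 0) (fun i h => stepF i h) i with hG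
  have hGsucc : ∀ (i : ℕ) (z : Fin n → ℝ), G (i + 1) z = stepF i (G i) z := fun i z => rfl
  have hG0 : ∀ z, G 0 z = 0 := fun z => rfl
  -- stabilization
  have hch : ∀ ρ : ℝ, ∃ N, ∀ i, N ≤ i → ∀ z : Fin n → ℝ, ‖z‖ ≤ ρ → G i z = G N z := by
    intro ρ
    rcases le_or_gt 0 ρ with hρ | hρ
    swap
    · exact ⟨0, fun i _ z hz => absurd (le_trans (norm_nonneg z) hz) (not_le.mpr hρ)⟩
    set s := (hfin (ρ + 2⁻¹)).toFinset with hs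
    refine ⟨(s.sup id) + 1, ?_⟩
    have hkey : ∀ i, (s.sup id) + 1 ≤ i → ∀ z : Fin n → ℝ, ‖z‖ ≤ ρ → G (i+1) z = G i z := by
      intro i hi z hz
      have his : i ∉ s := by
        intro hmem
        have := Finset.le_sup (f := id) hmem
        simp only [id] at this
        omega
      have hnot : ¬ (0 < R i ∧ ‖c i‖ ≤ ρ + 2⁻¹) := by
        intro hcontra
        exact his ((hfin (ρ + 2⁻¹)).mem_toFinset.mpr hcontra)
      rw [hGsucc]
      apply (hstep i (G i)).1
      intro hmem
      rw [mem_closedBall] at hmem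
      rcases hRpos i with h0 | h0
      · apply hnot
        refine ⟨h0, ?_⟩
        have h1 : ‖c i‖ - ‖z‖ ≤ dist z (c i) := by
          rw [dist_comm, dist_eq_norm]
          linarith [norm_sub_norm_le (c i) z]
        have h2 : 2 * R i ≤ 2⁻¹ := by linarith [hR4 i]
        linarith
      · rw [h0] at hmem
        linarith [dist_nonneg (x := z) (y := c i)]
    intro i hi z hz
    obtain ⟨d, rfl⟩ := Nat.exists_eq_add_of_le hi
    induction d with
    | zero => rfl
    | succ d ih =>
      have : s.sup id + 1 + (d + 1) = (s.sup id + 1 + d) + 1 := by omega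
      rw [this, hkey _ (by omega) z hz, ih (by omega)]
  choose Nf hNf using hch
  set g : (Fin n → ℝ) → ℝ := fun z => G (Nf ‖z‖) z with hg
  have hgeq : ∀ (z : Fin n → ℝ) (i : ℕ), Nf ‖z‖ ≤ i → G i z = g z :=
    fun z i hi => hNf ‖z‖ i hi z le_rfl
  refine ⟨g, ?_, ?_⟩
  · rw [continuous_iff_continuousAt]
    intro x
    set N : ℕ := Nf (‖x‖ + 1) with hN
    have hEq : Set.EqOn g (G N) (ball x 1) := by
      intro z hz
      have hzn : ‖z‖ ≤ ‖x‖ + 1 := by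
        have : dist z x < 1 := mem_ball.mp hz
        calc ‖z‖ = ‖x + (z - x)‖ := by ring_nf
          _ ≤ ‖x‖ + ‖z - x‖ := norm_add_le _ _
          _ ≤ ‖x‖ + 1 := by rw [← dist_eq_norm]; linarith
      have h1 : G (max N (Nf ‖z‖)) z = g z := hgeq z _ (le_max_right _ _)
      have h2 : G (max N (Nf ‖z‖)) z = G N z := hNf (‖x‖ + 1) _ (le_max_left _ _) z hzn
      rw [← h1, h2]
    exact ((G N).continuous.continuousAt).congr
      (Filter.eventuallyEq_of_mem (ball_mem_nhds x one_pos) hEq).symm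
  · intro x
    set A : Set ℕ := {i | G (i+1) x ≠ G i x} with hA
    have hAsub : A ⊆ {i : ℕ | 0 < R i ∧ ‖c i‖ ≤ ‖x‖ + 2⁻¹} := by
      intro i hi
      have hxball : x ∈ closedBall (c i) (2 * R i) := by
        by_contra hxb
        exact hi (by rw [hGsucc]; exact (hstep i (G i)).1 x hxb)
      rw [mem_closedBall] at hxball
      have hRi : 0 < R i := by
        rcases hRpos i with h0 | h0
        · exact h0
        · rw [h0] at hxball
          exfalso
          linarith [dist_nonneg (x := x) (y := c i)]
      refine ⟨hRi, ?_⟩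
      have h1 : ‖c i‖ ≤ ‖x‖ + dist x (c i) := by
        rw [dist_comm, dist_eq_norm]
        linarith [norm_sub_norm_le (c i) x]
      have h2 : 2 * R i ≤ 2⁻¹ := by linarith [hR4 i]
      linarith
    have hAfin : A.Finite := (hfin _).subset hAsub
    by_cases hAne : A.Nonempty
    · set j : ℕ := hAfin.toFinset.max' (hAfin.toFinset_nonempty.mpr hAne) with hj
      have hjA : j ∈ A := hAfin.mem_toFinset.mp (hAfin.toFinset.max'_mem _)
      have hjmax : ∀ i ∈ A, i ≤ j := fun i hi =>
        hAfin.toFinset.le_max' i (hAfin.mem_toFinset.mpr hi)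
      have hstable : ∀ d : ℕ, G (j + 1 + d) x = G (j + 1) x := by
        intro d
        induction d with
        | zero => rfl
        | succ d ih =>
          have heq : G (j + 1 + d + 1) x = G (j + 1 + d) x := by
            by_contra hne
            have hmem : j + 1 + d ∈ A := hne
            have := hjmax _ hmem
            omega
          rw [show j + 1 + (d + 1) = j + 1 + d + 1 by omega, heq, ih]
      have hgx : g x = G (j + 1) x := by
        have h1 : G (max (j + 1) (Nf ‖x‖)) x = g x := hgeq x _ (le_max_right _ _)
        obtain ⟨d, hd⟩ := Nat.exists_eq_add_of_le (le_max_left (j + 1) (Nf ‖x‖))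
        rw [← h1, hd, hstable d]
      rcases (hstep j (G j)).2.2 x with heq | hsafe'
      · exact absurd (by rw [hGsucc]; exact heq) hjA
      · rw [hgx, hGsucc j]
        exact hsafe'
    · have hz : ∀ i, G i x = 0 := by
        intro i
        induction i with
        | zero => exact hG0 x
        | succ i ih =>
          have : i ∉ A := fun hi => hAne ⟨i, hi⟩
          have heq : G (i + 1) x = G i x := by
            by_contra hne
            exact this hne
          rw [heq, ih]
      have hgx : g x = 0 := by rw [← hgeq x (Nf ‖x‖) le_rfl, hz]
      have hex : ∃ i, 0 < R i ∧ x ∈ ball (c i) (R i) := hcov x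
      set i0 : ℕ := Nat.find hex with hi0def
      obtain ⟨hi0R, hi0b⟩ := Nat.find_spec hex
      have hxT : x ∈ T i0 := by
        refine ⟨ball_subset_closedBall hi0b, ?_⟩
        intro hmem
        simp only [Set.mem_iUnion] at hmem
        obtain ⟨j, hjlt, hjb⟩ := hmem
        have hjR : 0 < R j := by
          have := mem_ball.mp hjb
          linarith [dist_nonneg (x := x) (y := c j)]
        exact Nat.find_min hex (Finset.mem_range.mp hjlt) ⟨hjR, hjb⟩
      obtain ⟨hval, hsafe'⟩ := (hstep i0 (G i0)).2.1 x hxT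
      have hy0 : y i0 = 0 := by
        have e1 : G (i0 + 1) x = y i0 := by rw [hGsucc]; exact hval
        rw [hz (i0 + 1)] at e1
        exact e1.symm
      rw [hgx, ← hy0]
      exact hsafe'

lemma not_countable_closedBall (hn : 1 ≤ n) (z : Fin n → ℝ) {ε : ℝ} (hε : 0 < ε) :
    ¬ (closedBall z ε).Countable := by
  intro hc
  set i0 : Fin n := ⟨0, hn⟩ with hi0
  set h : ℝ → (Fin n → ℝ) := fun t => Function.update z i0 (z i0 + t) with hh
  have hinj : Function.Injective h := by
    intro t t' htt
    have := congrFun htt i0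
    simp only [hh, Function.update_self] at this
    linarith
  have hsub : Set.Ioo 0 ε ⊆ h ⁻¹' (closedBall z ε) := by
    intro t ht
    simp only [Set.mem_preimage, mem_closedBall]
    rw [dist_pi_le_iff (le_of_lt hε)]
    intro j
    by_cases hj : j = i0
    · subst hj
      simp only [hh, Function.update_self, Real.dist_eq]
      rw [add_sub_cancel_left]
      rw [abs_of_nonneg (le_of_lt ht.1)]
      exact le_of_lt ht.2
    · simp only [hh, Function.update_of_ne hj, dist_self]
      exact le_of_lt hε
  exact uncountable_Ioo hε ((hc.preimage hinj).mono hsub)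

theorem stmt18' (hn : 2 ≤ n) (f : (Fin n → ℝ) → ℝ)
    (hf : ∀ F : Set ((Fin n → ℝ) × ℝ), IsClosed F → ¬ (Prod.fst '' F).Countable →
      ∃ x : Fin n → ℝ, (x, f x) ∈ F) :
    (∀ U : Set ((Fin n → ℝ) × ℝ), IsOpen U → (∀ x, (x, f x) ∈ U) →
      ∃ g : (Fin n → ℝ) → ℝ, Continuous g ∧ ∀ x, (x, g x) ∈ U) ∧
    ¬ (∀ K : Set (Fin n → ℝ), IsPreconnected K → IsPreconnected (f '' K)) := by
  have hn1 : 1 ≤ n := by omega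
  -- level sets meet every uncountable closed set
  have hlevel : ∀ C : Set (Fin n → ℝ), IsClosed C → ¬ C.Countable → ∀ cv : ℝ,
      ∃ x ∈ C, f x = cv := by
    intro C hCcl hCnc cv
    obtain ⟨x, hx⟩ := hf (C ×ˢ {cv}) (hCcl.prod isClosed_singleton)
      (by rwa [Set.fst_image_prod _ (Set.singleton_nonempty cv)])
    exact ⟨x, hx.1, hx.2⟩
  constructor
  · -- almost continuous
    intro U hUopen hUgraph
    have hKclosed : IsClosed Uᶜ := hUopen.isClosed_compl
    have hKc : (Prod.fst '' Uᶜ).Countable := by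
      by_contra hunc
      obtain ⟨x, hx⟩ := hf Uᶜ hKclosed hunc
      exact hx (hUgraph x)
    obtain ⟨g, hgc, hg⟩ := omission hKclosed hKc
      (fun x => ⟨f x, fun hmem => hmem (hUgraph x)⟩)
    exact ⟨g, hgc, fun x => not_not.mp (hg x)⟩
  · -- not Darboux
    intro hD
    set Kset : Set (Fin n → ℝ) := f ⁻¹' (Set.Iic 0 ∪ Set.Ici 1) with hKset
    have hrank : 1 < Module.rank ℝ (Fin n → ℝ) := by
      rw [rank_fin_fun]
      exact_mod_cast (by omega : 1 < n)
    have hKpre : IsPreconnected Kset := by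
      intro u v hu hv hcov hune hvne
      by_cases hCc : ((u ∪ v)ᶜ).Countable
      · have h1 : IsPathConnected ((u ∪ v)ᶜ)ᶜ :=
          hCc.isPathConnected_compl_of_one_lt_rank hrank
        rw [compl_compl] at h1
        have hpc : IsPreconnected (u ∪ v) := h1.isConnected.isPreconnected
        obtain ⟨p, hpK, hpu⟩ := hune
        obtain ⟨q, hqK, hqv⟩ := hvne
        obtain ⟨z, -, hzu, hzv⟩ := hpc u v hu hv subset_rfl
          ⟨p, hcov hpK, hpu⟩ ⟨q, hcov hqK, hqv⟩
        obtain ⟨ε, hε, hball⟩ := Metric.isOpen_iff.mp (hu.inter hv) z ⟨hzu, hzv⟩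
        have hcb : closedBall z (ε/2) ⊆ u ∩ v :=
          subset_trans (closedBall_subset_ball (by linarith)) hball
        obtain ⟨x, hxcb, hfx⟩ := hlevel (closedBall z (ε/2)) isClosed_closedBall
          (not_countable_closedBall hn1 z (by linarith)) 0
        refine ⟨x, ?_, (hcb hxcb).1, (hcb hxcb).2⟩
        simp only [hKset, Set.mem_preimage, hfx]
        exact Or.inl Set.self_mem_Iic
      · obtain ⟨x, hxC, hfx⟩ := hlevel (u ∪ v)ᶜ (hu.union hv).isClosed_compl hCc 0
        have hxK : x ∈ Kset := by
          simp only [hKset, Set.mem_preimage, hfx]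
          exact Or.inl Set.self_mem_Iic
        exact absurd (hcov hxK) hxC
    have himg := hD Kset hKpre
    have h0 : (0:ℝ) ∈ f '' Kset := by
      obtain ⟨x, -, hfx⟩ := hlevel Set.univ isClosed_univ
        (fun hC => not_countable_closedBall hn1 0 one_pos (hC.mono (Set.subset_univ _))) 0
      exact ⟨x, by simp [hKset, Set.mem_preimage, hfx], hfx⟩
    have h1 : (1:ℝ) ∈ f '' Kset := by
      obtain ⟨x, -, hfx⟩ := hlevel Set.univ isClosed_univ
        (fun hC => not_countable_closedBall hn1 0 one_pos (hC.mono (Set.subset_univ _))) 1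
      exact ⟨x, by simp [hKset, Set.mem_preimage, hfx], hfx⟩
    obtain ⟨w, -, hw1, hw2⟩ := himg (Set.Iio 2⁻¹) (Set.Ioi 2⁻¹) isOpen_Iio isOpen_Ioi
      (by
        rintro w ⟨x, hxK, rfl⟩
        rcases hxK with hle | hge
        · exact Or.inl (by simp only [Set.mem_Iio]; have := Set.mem_Iic.mp hle; linarith)
        · exact Or.inr (by simp only [Set.mem_Ioi]; have := Set.mem_Ici.mp hge; linarith))
      ⟨0, h0, by norm_num⟩ ⟨1, h1, by norm_num⟩
    simp only [Set.mem_Iio] at hw1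
    simp only [Set.mem_Ioi] at hw2
    linarith

end Construction

/-- For `n ≥ 2`, every Jones function on `ℝⁿ` is almost continuous but not Darboux. -/
theorem stmt18 (n : ℕ) (hn : 2 ≤ n) (f : (Fin n → ℝ) → ℝ) (hf : JonesFn f) :
    AlmostContinuous f ∧ ¬ DarbouxFn f :=
  stmt18' hn f hf
end

section
/- For every n ≥ 2, there exists a linear subspace V of the real vector space of all functions from ℝⁿ to ℝ such that V is closed in the topology of pointwise convergence, dim(V) = 2^𝔠, and every nonzero element of V is Darboux but not almost continuous. In other words, the class D(ℝⁿ) \ AC(ℝⁿ) is 2^𝔠-spaceable with respect to the topology of pointwise convergence. -/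
open Cardinal

noncomputable section

namespace Stmt19Aux

open scoped Classical

/-- The rational-shift setoid on ℝ (cosets of ℚ). -/
def rq : Setoid ℝ where
  r a b := ∃ q : ℚ, b = a + q
  iseqv := by
    refine ⟨fun a => ⟨0, by simp⟩, ?_, ?_⟩
    · rintro a b ⟨q, rfl⟩
      exact ⟨-q, by push_cast; ring⟩
    · rintro a b c ⟨q, rfl⟩ ⟨q', rfl⟩
      exact ⟨q + q', by push_cast; ring⟩

abbrev Qt : Type := Quotient rq

def pr (x : ℝ) : Qt := Quotient.mk rq x

lemma pr_out (c : Qt) : pr c.out = c := c.out_eq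

lemma pr_surjective : Function.Surjective pr := fun c => ⟨c.out, pr_out c⟩

lemma pr_eq_iff {x y : ℝ} : pr x = pr y ↔ ∃ q : ℚ, y = x + q :=
  ⟨fun h => Quotient.exact h, fun h => Quotient.sound h⟩

lemma dense_coset (x z a b : ℝ) (hab : a < b) :
    ∃ y, y ∈ Set.Ioo a b ∧ pr y = pr x ∧ y ≠ z := by
  obtain ⟨q1, hq11, hq12⟩ := exists_rat_btwn (show a - x < b - x by linarith)
  obtain ⟨q2, hq21, hq22⟩ := exists_rat_btwn hq12
  by_cases hz : x + (q1 : ℝ) = z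
  · refine ⟨x + q2, ⟨by linarith, by linarith⟩, pr_eq_iff.mpr ⟨-q2, by push_cast; ring⟩, ?_⟩
    intro h
    rw [← hz] at h
    have h2 : (q2 : ℝ) = q1 := add_left_cancel h
    linarith
  · exact ⟨x + q1, ⟨by linarith, by linarith⟩, pr_eq_iff.mpr ⟨-q1, by push_cast; ring⟩, hz⟩

def ratPart (x : ℝ) : ℚ :=
  Classical.choose (Quotient.exact (pr_out (pr x)) : ∃ q : ℚ, x = (pr x).out + q)

lemma ratPart_spec (x : ℝ) : x = (pr x).out + ratPart x :=
  Classical.choose_spec (Quotient.exact (pr_out (pr x)) : ∃ q : ℚ, x = (pr x).out + q)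

lemma mk_Qt : #Qt = Cardinal.continuum := by
  apply le_antisymm
  · rw [← Cardinal.mk_real]
    exact Cardinal.mk_le_of_surjective pr_surjective
  · have hinj : Function.Injective (fun x : ℝ => ((pr x, ratPart x) : Qt × ℚ)) := by
      intro x y hxy
      have h1 : pr x = pr y := congrArg Prod.fst hxy
      have h2 : ratPart x = ratPart y := congrArg Prod.snd hxy
      rw [ratPart_spec x, ratPart_spec y, h1, h2]
    have h1 : Cardinal.continuum ≤ #(Qt × ℚ) := by
      rw [← Cardinal.mk_real]
      exact Cardinal.mk_le_of_injective hinj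
    have h2 : #(Qt × ℚ) = #Qt * ℵ₀ := by
      rw [Cardinal.mk_prod, Cardinal.mkRat]
      simp
    rw [h2] at h1
    rcases le_or_gt ℵ₀ #Qt with hq | hq
    · have h3 : #Qt * ℵ₀ = #Qt := by
        rw [Cardinal.mul_eq_max hq le_rfl]
        exact max_eq_left hq
      rwa [h3] at h1
    · exfalso
      have h4 : #Qt * ℵ₀ ≤ ℵ₀ * ℵ₀ := mul_le_mul' hq.le le_rfl
      rw [Cardinal.aleph0_mul_aleph0] at h4
      exact Cardinal.aleph0_lt_continuum.not_ge (h1.trans h4)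

def j1 : Qt ≃ ℝ :=
  Classical.choice (Cardinal.eq.mp (mk_Qt.trans Cardinal.mk_real.symm))

def j2 : Qt ≃ ℝ := j1.trans (Equiv.swap (j1 (pr 0)) 5)

def j : Qt ≃ ℝ := j2.trans (Equiv.swap (j2 (pr (Real.sqrt 2))) (Real.sqrt 2 - 5))

lemma sqrt2_ne_coset : pr (Real.sqrt 2) ≠ pr 0 := by
  rw [Ne, pr_eq_iff]
  rintro ⟨q, hq⟩
  exact irrational_sqrt_two ⟨-q, by push_cast; linarith⟩

lemma sqrt2_lt_two : Real.sqrt 2 < 2 := by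
  nlinarith [Real.sq_sqrt (show (0:ℝ) ≤ 2 by norm_num), Real.sqrt_nonneg 2]

lemma j2_zero : j2 (pr 0) = 5 := by
  simp [j2, Equiv.swap_apply_left]

lemma j_zero : j (pr 0) = 5 := by
  have h1 : (5 : ℝ) ≠ j2 (pr (Real.sqrt 2)) := by
    rw [← j2_zero]
    exact fun h => sqrt2_ne_coset (j2.injective h.symm)
  have h2 : (5:ℝ) ≠ Real.sqrt 2 - 5 := by
    have := sqrt2_lt_two
    intro h; linarith
  simp only [j, Equiv.trans_apply, j2_zero]
  exact Equiv.swap_apply_of_ne_of_ne h1 h2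

lemma j_sqrt2 : j (pr (Real.sqrt 2)) = Real.sqrt 2 - 5 := by
  simp [j, Equiv.swap_apply_left]

/-- The diagonal-dodging everywhere-surjective function. -/
def t (s : ℝ) : ℝ := if j (pr s) = s then s + 1 else j (pr s)

lemma t_ne (s : ℝ) : t s ≠ s := by
  unfold t
  split_ifs with h
  · intro h'; linarith
  · exact h

lemma t_zero : t 0 = 5 := by
  have h : j (pr 0) ≠ 0 := by rw [j_zero]; norm_num
  unfold t
  rw [if_neg h, j_zero]

lemma t_sqrt2 : t (Real.sqrt 2) = Real.sqrt 2 - 5 := by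
  have h : j (pr (Real.sqrt 2)) ≠ Real.sqrt 2 := by
    rw [j_sqrt2]; intro h; linarith
  unfold t
  rw [if_neg h, j_sqrt2]

lemma t_surj (y a b : ℝ) (hab : a < b) : ∃ s ∈ Set.Ioo a b, t s = y := by
  obtain ⟨s, hs, hpr, hne⟩ := dense_coset (j.symm y).out y a b hab
  have hprc : pr s = j.symm y := by rw [hpr, pr_out]
  have hjy : j (pr s) = y := by rw [hprc]; simp
  refine ⟨s, hs, ?_⟩
  unfold t
  rw [if_neg (by rw [hjy]; exact fun h => hne h.symm), hjy]

lemma mk_Qt_prod : #Qt = #(ℝ × ℝ) := by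
  rw [mk_Qt, Cardinal.mk_prod, Cardinal.mk_real]
  simp only [Cardinal.lift_id]
  rw [Cardinal.mul_eq_self Cardinal.aleph0_le_continuum]

def W : Qt ≃ (ℝ × ℝ) := Classical.choice (Cardinal.eq.mp mk_Qt_prod)

def T (s : ℝ) : ℝ := (W (pr s)).1

def S (s : ℝ) : ℝ := (W (pr s)).2

def E : Set ℝ := Set.range (Quotient.out : Qt → ℝ)

lemma mem_E_iff {x : ℝ} : x ∈ E ↔ (pr x).out = x := by
  constructor
  · rintro ⟨c, rfl⟩
    rw [pr_out]
  · intro h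
    exact ⟨pr x, h⟩

lemma TS_surj (t₀ σ₀ a b : ℝ) (hab : a < b) :
    ∃ s ∈ Set.Ioo a b, s ∉ E ∧ T s = t₀ ∧ S s = σ₀ := by
  obtain ⟨s, hs, hpr, hne⟩ := dense_coset (W.symm (t₀, σ₀)).out (W.symm (t₀, σ₀)).out a b hab
  have hprc : pr s = W.symm (t₀, σ₀) := by rw [hpr, pr_out]
  refine ⟨s, hs, ?_, ?_, ?_⟩
  · intro hE
    rw [mem_E_iff, hprc] at hE
    exact hne hE.symm
  · unfold T; rw [hprc]; simp
  · unfold S; rw [hprc]; simp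

def eh (σ : ℝ) : ℝ := (j.symm σ).out

lemma eh_mem (σ : ℝ) : eh σ ∈ E := ⟨j.symm σ, rfl⟩

lemma j_pr_eh (σ : ℝ) : j (pr (eh σ)) = σ := by
  unfold eh; rw [pr_out]; simp

section Main

variable (n : ℕ) (hn : 2 ≤ n)

def i0 : Fin n := ⟨0, by omega⟩

def i1 : Fin n := ⟨1, by omega⟩

lemma i1_ne_i0 : i1 n hn ≠ i0 n hn := by
  simp [i0, i1, Fin.ext_iff]

def Lam (x : Fin n → ℝ) : ℝ :=
  if x (i0 n hn) ∈ E then t (x (i1 n hn)) else T (x (i0 n hn))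

def Sg (x : Fin n → ℝ) : ℝ :=
  if x (i0 n hn) ∈ E then j (pr (x (i0 n hn))) else S (x (i0 n hn))

def P (σ : ℝ) : Fin n → ℝ := fun i => if i = i0 n hn then eh σ else 0

lemma P_apply_i0 (σ : ℝ) : P n hn σ (i0 n hn) = eh σ := if_pos rfl

lemma P_apply_i1 (σ : ℝ) : P n hn σ (i1 n hn) = 0 := if_neg (i1_ne_i0 n hn)

lemma Lam_P (σ : ℝ) : Lam n hn (P n hn σ) = 5 := by
  unfold Lam
  rw [P_apply_i0, P_apply_i1, if_pos (eh_mem σ), t_zero]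

lemma Sg_P (σ : ℝ) : Sg n hn (P n hn σ) = σ := by
  unfold Sg
  rw [P_apply_i0, if_pos (eh_mem σ), j_pr_eh]

/-- The basic linear parametrization of our space. -/
def Ff (φ : ℝ → ℝ) : (Fin n → ℝ) → ℝ := fun x => Lam n hn x * φ (Sg n hn x)

lemma Ff_P (φ : ℝ → ℝ) (σ : ℝ) : Ff n hn φ (P n hn σ) = 5 * φ σ := by
  unfold Ff
  rw [Lam_P, Sg_P]

def V : Submodule ℝ ((Fin n → ℝ) → ℝ) where
  carrier := {f | ∀ x, 5 * f x = Lam n hn x * f (P n hn (Sg n hn x))}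
  add_mem' := by
    intro f g hf hg x
    simp only [Pi.add_apply]
    calc 5 * (f x + g x) = 5 * f x + 5 * g x := by ring
    _ = Lam n hn x * f (P n hn (Sg n hn x)) + Lam n hn x * g (P n hn (Sg n hn x)) := by
        rw [hf x, hg x]
    _ = Lam n hn x * (f (P n hn (Sg n hn x)) + g (P n hn (Sg n hn x))) := by ring
  zero_mem' := by
    intro x
    simp
  smul_mem' := by
    intro c f hf x
    simp only [Pi.smul_apply, smul_eq_mul]
    calc 5 * (c * f x) = c * (5 * f x) := by ring
    _ = c * (Lam n hn x * f (P n hn (Sg n hn x))) := by rw [hf x]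
    _ = Lam n hn x * (c * f (P n hn (Sg n hn x))) := by ring

lemma mem_V_iff (f : (Fin n → ℝ) → ℝ) : f ∈ V n hn ↔ ∃ φ, f = Ff n hn φ := by
  constructor
  · intro hf
    refine ⟨fun σ => f (P n hn σ) / 5, ?_⟩
    funext x
    have h1 := hf x
    show f x = Lam n hn x * (f (P n hn (Sg n hn x)) / 5)
    field_simp
    linarith
  · rintro ⟨φ, rfl⟩
    intro x
    rw [Ff_P]
    show 5 * (Lam n hn x * φ (Sg n hn x)) = Lam n hn x * (5 * φ (Sg n hn x))
    ring

lemma V_closed : IsClosed ((V n hn : Set ((Fin n → ℝ) → ℝ))) := by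
  have hset : (V n hn : Set ((Fin n → ℝ) → ℝ)) =
      ⋂ x, {f : (Fin n → ℝ) → ℝ | 5 * f x = Lam n hn x * f (P n hn (Sg n hn x))} := by
    ext f
    simp only [Set.mem_iInter, Set.mem_setOf_eq]
    rfl
  rw [hset]
  refine isClosed_iInter fun x => isClosed_eq ?_ ?_
  · exact continuous_const.mul (continuous_apply x)
  · exact continuous_const.mul (continuous_apply _)

def FL : (ℝ → ℝ) →ₗ[ℝ] ((Fin n → ℝ) → ℝ) where
  toFun := Ff n hn
  map_add' φ ψ := by
    funext x
    simp only [Ff, Pi.add_apply]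
    ring
  map_smul' c φ := by
    funext x
    simp only [Ff, Pi.smul_apply, smul_eq_mul, RingHom.id_apply]
    ring

lemma FL_inj : Function.Injective (FL n hn) := by
  intro φ ψ h
  funext σ
  have h1 : Ff n hn φ (P n hn σ) = Ff n hn ψ (P n hn σ) := congrFun h (P n hn σ)
  rw [Ff_P, Ff_P] at h1
  linarith

lemma V_eq_range : V n hn = LinearMap.range (FL n hn) := by
  ext f
  rw [mem_V_iff]
  simp only [LinearMap.mem_range]
  constructor
  · rintro ⟨φ, rfl⟩
    exact ⟨φ, rfl⟩
  · rintro ⟨φ, rfl⟩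
    exact ⟨φ, rfl⟩

lemma mk_real_fun : #(ℝ → ℝ) = 2 ^ Cardinal.continuum := by
  rw [Cardinal.mk_arrow]
  simp only [Cardinal.lift_id, Cardinal.mk_real]
  exact Cardinal.power_self_eq Cardinal.aleph0_le_continuum

lemma rank_real_fun : Module.rank ℝ (ℝ → ℝ) = 2 ^ Cardinal.continuum := by
  set M := ℝ → ℝ
  let B := Module.Basis.ofVectorSpace ℝ M
  have hBM : #(Module.Basis.ofVectorSpaceIndex ℝ M) = Module.rank ℝ M := B.mk_eq_rank''
  have he : #M = #((Module.Basis.ofVectorSpaceIndex ℝ M) →₀ ℝ) := Cardinal.mk_congr B.repr.toEquiv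
  have hM : #M = 2 ^ Cardinal.continuum := mk_real_fun
  have hinf : Infinite (Module.Basis.ofVectorSpaceIndex ℝ M) := by
    rw [Cardinal.infinite_iff]
    by_contra hfin
    push_neg at hfin
    have h1 : #((Module.Basis.ofVectorSpaceIndex ℝ M) →₀ ℝ) ≤ #(Module.Basis.ofVectorSpaceIndex ℝ M → ℝ) :=
      Cardinal.mk_le_of_injective (DFunLike.coe_injective)
    have h2 : #(Module.Basis.ofVectorSpaceIndex ℝ M → ℝ) ≤ Cardinal.continuum := by
      rw [Cardinal.mk_arrow]
      simp only [Cardinal.lift_id, Cardinal.mk_real]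
      calc Cardinal.continuum ^ (#(Module.Basis.ofVectorSpaceIndex ℝ M))
          ≤ Cardinal.continuum ^ ℵ₀ :=
            Cardinal.power_le_power_left Cardinal.continuum_ne_zero hfin.le
        _ = Cardinal.continuum := Cardinal.continuum_power_aleph0
    have hle : (2 : Cardinal) ^ Cardinal.continuum ≤ Cardinal.continuum := by
      rw [← hM, he]
      exact h1.trans h2
    have hlt := Cardinal.cantor Cardinal.continuum
    exact hlt.not_ge hle
  have hfs : #((Module.Basis.ofVectorSpaceIndex ℝ M) →₀ ℝ) =
      max #(Module.Basis.ofVectorSpaceIndex ℝ M) Cardinal.continuum := by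
    rw [Cardinal.mk_finsupp_of_infinite, Cardinal.mk_real]
  rw [he, hfs] at hM
  rw [← hBM]
  rcases le_total #(Module.Basis.ofVectorSpaceIndex ℝ M) Cardinal.continuum with hle | hle
  · exfalso
    rw [max_eq_right hle] at hM
    exact (Cardinal.cantor Cardinal.continuum).ne hM
  · rw [max_eq_left hle] at hM
    exact hM

lemma rank_V : Module.rank ℝ (V n hn) = 2 ^ Cardinal.continuum := by
  have h1 : Module.rank ℝ (LinearMap.range (FL n hn)) = Module.rank ℝ (ℝ → ℝ) :=
    ((LinearEquiv.ofInjective (FL n hn) (FL_inj n hn)).rank_eq).symm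
  rw [V_eq_range, h1, rank_real_fun]

lemma darboux (φ : ℝ → ℝ) (hφ : φ ≠ 0) : DarbouxFn (Ff n hn φ) := by
  obtain ⟨σs, hσs⟩ : ∃ σ, φ σ ≠ 0 := by
    by_contra hc
    push_neg at hc
    exact hφ (funext hc)
  intro K hK
  rcases K.eq_empty_or_nonempty with rfl | hKne
  · rw [Set.image_empty]; exact isPreconnected_empty
  have hI1pc : IsPreconnected ((fun x : Fin n → ℝ => x (i0 n hn)) '' K) :=
    hK.image _ (continuous_apply _).continuousOn
  by_cases hI1 : ((fun x : Fin n → ℝ => x (i0 n hn)) '' K).Nontrivial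
  · obtain ⟨a0, ha0, b0, hb0, hab0⟩ := hI1
    have hmain : ∀ (a b : ℝ), a ∈ ((fun x : Fin n → ℝ => x (i0 n hn)) '' K) →
        b ∈ ((fun x : Fin n → ℝ => x (i0 n hn)) '' K) → a < b →
        Ff n hn φ '' K = Set.univ := by
      intro a b ha hb hab
      apply Set.eq_univ_of_forall
      intro y
      obtain ⟨s, hsIoo, hsE, hT, hS⟩ := TS_surj (y / φ σs) σs a b hab
      have hsmem : s ∈ ((fun x : Fin n → ℝ => x (i0 n hn)) '' K) :=
        hI1pc.Icc_subset ha hb ⟨hsIoo.1.le, hsIoo.2.le⟩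
      obtain ⟨x, hxK, hxs⟩ := hsmem
      have hxs' : x (i0 n hn) = s := hxs
      refine ⟨x, hxK, ?_⟩
      show Lam n hn x * φ (Sg n hn x) = y
      unfold Lam Sg
      rw [hxs', if_neg hsE, if_neg hsE, hT, hS]
      exact div_mul_cancel₀ y hσs
    rcases hab0.lt_or_gt with h' | h'
    · rw [hmain a0 b0 ha0 hb0 h']; exact isPreconnected_univ
    · rw [hmain b0 a0 hb0 ha0 h']; exact isPreconnected_univ
  · rw [Set.not_nontrivial_iff] at hI1
    obtain ⟨x₀, hx₀⟩ := hKne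
    set s := x₀ (i0 n hn) with hs
    have hall : ∀ x ∈ K, x (i0 n hn) = s := by
      intro x hx
      exact hI1 ⟨x, hx, rfl⟩ ⟨x₀, hx₀, rfl⟩
    by_cases hsE : s ∈ E
    · set c := φ (j (pr s)) with hc
      by_cases hc0 : c = 0
      · apply Set.Subsingleton.isPreconnected
        rintro y ⟨x, hx, rfl⟩ y' ⟨x', hx', rfl⟩
        have e1 : Ff n hn φ x = 0 := by
          unfold Ff Lam Sg
          rw [hall x hx, if_pos hsE, if_pos hsE, ← hc, hc0, mul_zero]
        have e2 : Ff n hn φ x' = 0 := by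
          unfold Ff Lam Sg
          rw [hall x' hx', if_pos hsE, if_pos hsE, ← hc, hc0, mul_zero]
        rw [e1, e2]
      · have hI2pc : IsPreconnected ((fun x : Fin n → ℝ => x (i1 n hn)) '' K) :=
          hK.image _ (continuous_apply _).continuousOn
        by_cases hI2 : ((fun x : Fin n → ℝ => x (i1 n hn)) '' K).Nontrivial
        · obtain ⟨a0, ha0, b0, hb0, hab0⟩ := hI2
          have hmain : ∀ (a b : ℝ), a ∈ ((fun x : Fin n → ℝ => x (i1 n hn)) '' K) →
              b ∈ ((fun x : Fin n → ℝ => x (i1 n hn)) '' K) → a < b →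
              Ff n hn φ '' K = Set.univ := by
            intro a b ha hb hab
            apply Set.eq_univ_of_forall
            intro y
            obtain ⟨s₂, hsIoo, hts⟩ := t_surj (y / c) a b hab
            have hsmem : s₂ ∈ ((fun x : Fin n → ℝ => x (i1 n hn)) '' K) :=
              hI2pc.Icc_subset ha hb ⟨hsIoo.1.le, hsIoo.2.le⟩
            obtain ⟨x, hxK, hxs⟩ := hsmem
            have hxs' : x (i1 n hn) = s₂ := hxs
            refine ⟨x, hxK, ?_⟩
            show Lam n hn x * φ (Sg n hn x) = y
            unfold Lam Sg
            rw [hall x hxK, if_pos hsE, if_pos hsE, hxs', hts, ← hc]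
            exact div_mul_cancel₀ y hc0
          rcases hab0.lt_or_gt with h' | h'
          · rw [hmain a0 b0 ha0 hb0 h']; exact isPreconnected_univ
          · rw [hmain b0 a0 hb0 ha0 h']; exact isPreconnected_univ
        · rw [Set.not_nontrivial_iff] at hI2
          apply Set.Subsingleton.isPreconnected
          rintro y ⟨x, hx, rfl⟩ y' ⟨x', hx', rfl⟩
          have h12 : x (i1 n hn) = x' (i1 n hn) :=
            hI2 ⟨x, hx, rfl⟩ ⟨x', hx', rfl⟩
          unfold Ff Lam Sg
          rw [hall x hx, hall x' hx']
          simp only [if_pos hsE]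
          rw [h12]
    · apply Set.Subsingleton.isPreconnected
      rintro y ⟨x, hx, rfl⟩ y' ⟨x', hx', rfl⟩
      unfold Ff Lam Sg
      rw [hall x hx, hall x' hx']
      simp only [if_neg hsE]

lemma not_ac (φ : ℝ → ℝ) (hφ : φ ≠ 0) : ¬ AlmostContinuous (Ff n hn φ) := by
  obtain ⟨σs, hσs⟩ : ∃ σ, φ σ ≠ 0 := by
    by_contra hc
    push_neg at hc
    exact hφ (funext hc)
  set c := φ σs with hcdef
  set sh := eh σs with hshdef
  intro hAC
  set Bset : Set ((Fin n → ℝ) × ℝ) :=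
    {p | p.1 (i0 n hn) = sh ∧ (p.2 = c * p.1 (i1 n hn) ∨
      (p.1 (i1 n hn) = 0 ∧ c * p.2 ≤ 0) ∨
      (p.1 (i1 n hn) = Real.sqrt 2 ∧ Real.sqrt 2 * c ^ 2 ≤ c * p.2))} with hBdef
  have hpc1 : Continuous fun p : (Fin n → ℝ) × ℝ => p.1 (i0 n hn) :=
    (continuous_apply _).comp continuous_fst
  have hpc2 : Continuous fun p : (Fin n → ℝ) × ℝ => p.1 (i1 n hn) :=
    (continuous_apply _).comp continuous_fst
  have hBclosed : IsClosed Bset := by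
    have hrw : Bset = ({p : (Fin n → ℝ) × ℝ | p.1 (i0 n hn) = sh} ∩
        ({p : (Fin n → ℝ) × ℝ | p.2 = c * p.1 (i1 n hn)} ∪
          (({p : (Fin n → ℝ) × ℝ | p.1 (i1 n hn) = 0} ∩
            {p : (Fin n → ℝ) × ℝ | c * p.2 ≤ 0}) ∪
          ({p : (Fin n → ℝ) × ℝ | p.1 (i1 n hn) = Real.sqrt 2} ∩
            {p : (Fin n → ℝ) × ℝ | Real.sqrt 2 * c ^ 2 ≤ c * p.2})))) := by
      ext p
      simp only [hBdef, Set.mem_setOf_eq, Set.mem_inter_iff, Set.mem_union]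
    rw [hrw]
    refine (isClosed_eq hpc1 continuous_const).inter (IsClosed.union ?_ (IsClosed.union ?_ ?_))
    · exact isClosed_eq continuous_snd (continuous_const.mul hpc2)
    · exact (isClosed_eq hpc2 continuous_const).inter
        (isClosed_le (continuous_const.mul continuous_snd) continuous_const)
    · exact (isClosed_eq hpc2 continuous_const).inter
        (isClosed_le continuous_const (continuous_const.mul continuous_snd))
  have hcsq : 0 < c ^ 2 := by positivity
  have hgraph : ∀ x, (x, Ff n hn φ x) ∈ Bsetᶜ := by
    intro x
    intro hmem
    simp only [hBdef, Set.mem_setOf_eq] at hmem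
    obtain ⟨hx0, hdisj⟩ := hmem
    have hE : x (i0 n hn) ∈ E := by rw [hx0, hshdef]; exact eh_mem σs
    have hf : Ff n hn φ x = t (x (i1 n hn)) * c := by
      unfold Ff Lam Sg
      rw [if_pos hE, if_pos hE, hx0, hshdef, j_pr_eh, ← hcdef]
    rcases hdisj with h | ⟨h1, h2⟩ | ⟨h1, h2⟩
    · rw [hf] at h
      have h' : t (x (i1 n hn)) * c = x (i1 n hn) * c := by rw [h]; ring
      exact t_ne _ (mul_right_cancel₀ hσs h')
    · rw [hf, h1, t_zero] at h2
      nlinarith [hcsq]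
    · rw [hf, h1, t_sqrt2] at h2
      nlinarith [hcsq]
  obtain ⟨g, hgc, hgU⟩ := hAC Bsetᶜ hBclosed.isOpen_compl hgraph
  set X : ℝ → (Fin n → ℝ) :=
    fun τ i => if i = i0 n hn then sh else if i = i1 n hn then τ else 0 with hXdef
  have hX0 : ∀ τ, X τ (i0 n hn) = sh := fun τ => by simp [hXdef]
  have hX1 : ∀ τ, X τ (i1 n hn) = τ := fun τ => by
    simp [hXdef, i1_ne_i0 n hn]
  have hXc : Continuous X := by
    apply continuous_pi
    intro i
    rcases eq_or_ne i (i0 n hn) with h0 | h0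
    · simpa [hXdef, h0] using continuous_const
    · rcases eq_or_ne i (i1 n hn) with h1 | h1
      · simpa [hXdef, h0, h1, i1_ne_i0 n hn] using continuous_id'
      · simpa [hXdef, h0, h1] using continuous_const
  set Z : ℝ → ℝ := fun τ => c * g (X τ) - c ^ 2 * τ with hZdef
  have hZc : Continuous Z :=
    (continuous_const.mul (hgc.comp hXc)).sub (continuous_const.mul continuous_id)
  have hz0 : 0 < Z 0 := by
    by_contra hle
    push_neg at hle
    refine hgU (X 0) ?_
    rw [hBdef]
    refine ⟨hX0 0, Or.inr (Or.inl ⟨hX1 0, ?_⟩)⟩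
    show c * g (X 0) ≤ 0
    have h1 : c * g (X 0) - c ^ 2 * 0 ≤ 0 := hle
    linarith
  have hz2 : Z (Real.sqrt 2) < 0 := by
    by_contra hge
    push_neg at hge
    refine hgU (X (Real.sqrt 2)) ?_
    rw [hBdef]
    refine ⟨hX0 (Real.sqrt 2), Or.inr (Or.inr ⟨hX1 (Real.sqrt 2), ?_⟩)⟩
    show Real.sqrt 2 * c ^ 2 ≤ c * g (X (Real.sqrt 2))
    have h1 : 0 ≤ c * g (X (Real.sqrt 2)) - c ^ 2 * Real.sqrt 2 := hge
    nlinarith [h1]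
  obtain ⟨τ, hτmem, hτeq⟩ := intermediate_value_Icc' (Real.sqrt_nonneg 2) hZc.continuousOn
    (Set.mem_Icc.mpr ⟨hz2.le, hz0.le⟩)
  refine hgU (X τ) ?_
  rw [hBdef]
  refine ⟨hX0 τ, Or.inl ?_⟩
  show g (X τ) = c * (X τ) (i1 n hn)
  rw [hX1]
  have hτeq' : c * g (X τ) - c ^ 2 * τ = 0 := hτeq
  have h2 : c * g (X τ) = c * (c * τ) := by linear_combination hτeq'
  exact mul_left_cancel₀ hσs h2

end Main

end Stmt19Aux

end

/-- For `n ≥ 2`, the class `D(ℝⁿ) \ AC(ℝⁿ)` is `2^𝔠`-spaceable with respect to the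
topology of pointwise convergence. -/
theorem stmt19 (n : ℕ) (hn : 2 ≤ n) :
    ∃ V : Submodule ℝ ((Fin n → ℝ) → ℝ),
      IsClosed (V : Set ((Fin n → ℝ) → ℝ)) ∧
      Module.rank ℝ V = 2 ^ Cardinal.continuum ∧
      ∀ f ∈ V, f ≠ 0 → DarbouxFn f ∧ ¬ AlmostContinuous f := by
  refine ⟨Stmt19Aux.V n hn, Stmt19Aux.V_closed n hn, Stmt19Aux.rank_V n hn, ?_⟩
  intro f hf hf0
  obtain ⟨φ, rfl⟩ := (Stmt19Aux.mem_V_iff n hn f).mp hf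
  have hφ : φ ≠ 0 := by
    rintro rfl
    apply hf0
    funext x
    simp [Stmt19Aux.Ff]
  exact ⟨Stmt19Aux.darboux n hn φ hφ, Stmt19Aux.not_ac n hn φ hφ⟩
end
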